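/- arXiv:2207.12874 — 5 statements merged into one kernel-verified Lean document; each statement's English description precedes it below -/
import Mathlib

section
/- For every C > 1 there exists n_C such that: if G = (V1, V2, E) is a bipartite graph with |V1|, |V2| ≥ n_C which contains no induced copy of K_{t1,t2} and no induced copy of its bipartite complement for any t1 ≥ C·log₂|V1| and t2 ≥ C·log₂|V2|, then the edge density e(G)/(|V1||V2|) lies between 1/(16C) and 1 − 1/(16C). -/
open Finset

/-- `G = (V1, V2, E)` is `C`-bipartite-Ramsey: for all `t1 ≥ C log₂ |V1|` and
`t2 ≥ C log₂ |V2|` there is no induced `K_{t1,t2}` nor its bipartite complement. -/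
def BipRamsey {V1 V2 : Type} [Fintype V1] [Fintype V2] (E : V1 → V2 → Prop) (C : ℝ) : Prop :=
  ∀ (A : Finset V1) (B : Finset V2),
    C * Real.logb 2 (Fintype.card V1) ≤ A.card →
    C * Real.logb 2 (Fintype.card V2) ≤ B.card →
    ¬ ((∀ a ∈ A, ∀ b ∈ B, E a b) ∨ (∀ a ∈ A, ∀ b ∈ B, ¬ E a b))


private lemma four_rpow_neg_le {x : ℝ} (hx0 : 0 ≤ x) (hx : x ≤ 1/4) :
    (4:ℝ) ^ (-x) ≤ 1 - x := by
  have hl2a := Real.log_two_gt_d9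
  have hl2b := Real.log_two_lt_d9
  have hlog : Real.log 4 = 2 * Real.log 2 := by
    rw [show (4:ℝ) = 2^(2:ℕ) by norm_num, Real.log_pow]; push_cast; ring
  have h1 : (4:ℝ)^(-x) = Real.exp (-(x * Real.log 4)) := by
    rw [Real.rpow_def_of_pos (by norm_num : (0:ℝ) < 4)]; ring_nf
  have hpos : (0:ℝ) < 1 + x * Real.log 4 := by nlinarith
  have h2 : Real.exp (-(x*Real.log 4)) ≤ 1/(1 + x*Real.log 4) := by
    rw [Real.exp_neg, one_div]
    apply inv_anti₀ hpos
    have := Real.add_one_le_exp (x*Real.log 4)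
    linarith
  have h3 : 1/(1+x*Real.log 4) ≤ 1 - x := by
    rw [div_le_iff₀ hpos]
    have h5 : (0:ℝ) ≤ Real.log 4 - 1 - x * Real.log 4 := by nlinarith
    nlinarith [mul_nonneg hx0 h5]
  linarith [h1 ▸ le_trans h2 h3]

private lemma greedy {V1 V2 : Type} [Fintype V1] [Fintype V2] (E : V1 → V2 → Prop) [∀ a b, Decidable (E a b)]
    (d : ℝ) (hd0 : 0 ≤ d) (hd : 4*d ≤ 1) (S0 : Finset V2)
    (hS0 : ∀ b ∈ S0, (∑ a : V1, (if E a b then (1:ℝ) else 0)) ≤ 2*d*(Fintype.card V1)) :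
    ∀ k : ℕ, 2*k ≤ Fintype.card V1 →
    ∃ (A : Finset V1) (S : Finset V2), A.card = k ∧ S ⊆ S0 ∧
      (S0.card : ℝ) * (1-4*d)^k ≤ S.card ∧ ∀ a ∈ A, ∀ b ∈ S, ¬ E a b := by
  classical
  intro k
  induction k with
  | zero => intro _; exact ⟨∅, S0, by simp, subset_rfl, by simp, by simp⟩
  | succ k ih =>
    intro hk
    obtain ⟨A, S, hAcard, hSsub, hScard, hAS⟩ := ih (by omega)
    set n1 := Fintype.card V1 with hn1
    -- the candidate set
    set R : Finset V1 := univ \ A with hR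
    have hRcard : R.card = n1 - k := by
      rw [hR, card_sdiff_of_subset (subset_univ A), hAcard, card_univ]
    have hkn : 2*k + 2 ≤ n1 := by omega
    have hRne : R.Nonempty := by
      rw [← card_pos, hRcard]; omega
    have hRhalf : (n1:ℝ)/2 ≤ (R.card:ℝ) := by
      rw [hRcard]
      have : k ≤ n1 - k := by omega
      have h2 : (n1 - k : ℕ) + (n1-k:ℕ) ≥ n1 := by omega
      have := Nat.cast_le (α := ℝ) |>.2 h2
      push_cast at this ⊢
      linarith
    -- degree of a into S
    set degS : V1 → ℝ := fun a => ∑ b ∈ S, (if E a b then (1:ℝ) else 0) with hdegS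
    have hdegnonneg : ∀ a, 0 ≤ degS a := fun a => Finset.sum_nonneg (fun b _ => by positivity)
    have hSnn : (0:ℝ) ≤ (S.card : ℝ) := by positivity
    -- find a vertex of small degree
    have hfind : ∃ a ∈ R, degS a ≤ 4*d*(S.card) := by
      by_contra hno
      push_neg at hno
      have h1 : ∑ a ∈ R, (4*d*(S.card:ℝ)) < ∑ a ∈ R, degS a :=
        Finset.sum_lt_sum_of_nonempty hRne (fun a ha => hno a ha)
      have h2 : ∑ a ∈ R, degS a ≤ ∑ a : V1, degS a :=
        Finset.sum_le_sum_of_subset_of_nonneg (subset_univ R) (fun a _ _ => hdegnonneg a)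
      have h3 : ∑ a : V1, degS a = ∑ b ∈ S, ∑ a : V1, (if E a b then (1:ℝ) else 0) := by
        rw [hdegS]; exact Finset.sum_comm
      have h4 : ∑ b ∈ S, ∑ a : V1, (if E a b then (1:ℝ) else 0) ≤ (S.card:ℝ) * (2*d*n1) := by
        calc ∑ b ∈ S, ∑ a : V1, (if E a b then (1:ℝ) else 0)
            ≤ ∑ b ∈ S, (2*d*(n1:ℝ)) := Finset.sum_le_sum (fun b hb => hS0 b (hSsub hb))
          _ = (S.card:ℝ) * (2*d*n1) := by rw [Finset.sum_const, nsmul_eq_mul]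
      have h5 : ∑ a ∈ R, (4*d*(S.card:ℝ)) = (R.card:ℝ) * (4*d*S.card) := by
        rw [Finset.sum_const, nsmul_eq_mul]
      have h6 : (S.card:ℝ)*(2*d*n1) ≤ (R.card:ℝ) * (4*d*S.card) := by
        have := mul_le_mul_of_nonneg_right hRhalf (by positivity : (0:ℝ) ≤ 4*d*S.card)
        nlinarith [hSnn, hd0]
      linarith
    obtain ⟨a, haR, hadeg⟩ := hfind
    have haA : a ∉ A := by
      rw [hR, mem_sdiff] at haR; exact haR.2
    refine ⟨insert a A, S.filter (fun b => ¬ E a b), ?_, ?_, ?_, ?_⟩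
    · rw [card_insert_of_notMem haA, hAcard]
    · exact (filter_subset _ _).trans hSsub
    · have hcard : ((S.filter (fun b => ¬ E a b)).card : ℝ) = (S.card:ℝ) - degS a := by
        have h7 : ∀ b ∈ S, (if ¬ E a b then (1:ℝ) else 0) = 1 - (if E a b then (1:ℝ) else 0) := by
          intro b _; by_cases h : E a b <;> simp [h]
        rw [Finset.card_filter]
        push_cast
        rw [Finset.sum_congr rfl h7, Finset.sum_sub_distrib, Finset.sum_const, nsmul_eq_mul,
          mul_one, hdegS]
      rw [hcard]
      have h8 : (1-4*d) * ((S0.card:ℝ) * (1-4*d)^k) ≤ (1-4*d) * (S.card:ℝ) :=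
        mul_le_mul_of_nonneg_left hScard (by linarith)
      calc (S0.card:ℝ) * (1-4*d)^(k+1) = (1-4*d) * ((S0.card:ℝ) * (1-4*d)^k) := by ring
        _ ≤ (1-4*d) * (S.card:ℝ) := h8
        _ = (S.card:ℝ) - 4*d*S.card := by ring
        _ ≤ (S.card:ℝ) - degS a := by linarith
    · intro a' ha' b hb
      rw [mem_insert] at ha'
      rw [mem_filter] at hb
      rcases ha' with rfl | ha'
      · exact hb.2
      · exact hAS a' ha' b hb.1

private lemma core {V1 V2 : Type} [Fintype V1] [Fintype V2] (E : V1 → V2 → Prop)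
    [∀ a b, Decidable (E a b)] (C : ℝ) (hC : 1 < C)
    (h21 : 2 ≤ Fintype.card V1) (h22 : 2 ≤ Fintype.card V2)
    (hceil : 2 * ⌈C * Real.logb 2 (Fintype.card V1)⌉₊ ≤ Fintype.card V1)
    (hS : C * Real.logb 2 (Fintype.card V2) ≤
        (Fintype.card V2 : ℝ)/2 * ((Fintype.card V1:ℝ) ^ (-(1/2):ℝ)) / Real.sqrt 2)
    (hT : (∑ b : V2, ∑ a : V1, (if E a b then (1:ℝ) else 0)) <
        (Fintype.card V1) * (Fintype.card V2) / (16*C)) :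
    ∃ (A : Finset V1) (B : Finset V2),
      C * Real.logb 2 (Fintype.card V1) ≤ A.card ∧
      C * Real.logb 2 (Fintype.card V2) ≤ B.card ∧
      ∀ a ∈ A, ∀ b ∈ B, ¬ E a b := by
  classical
  set n1 := Fintype.card V1 with hn1
  set n2 := Fintype.card V2 with hn2
  have hC0 : (0:ℝ) < C := by linarith
  set d : ℝ := 1/(16*C) with hd
  have hd0 : 0 < d := by positivity
  have hd4 : 4*d ≤ 1/4 := by
    rw [hd, mul_one_div, div_le_div_iff₀ (by positivity) (by norm_num)]
    nlinarith
  have hd1 : 4*d ≤ 1 := by linarith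
  have hn1pos : (0:ℝ) < n1 := by exact_mod_cast (by omega : 0 < n1)
  have hn2pos : (0:ℝ) < n2 := by exact_mod_cast (by omega : 0 < n2)
  set deg : V2 → ℝ := fun b => ∑ a : V1, (if E a b then (1:ℝ) else 0) with hdeg
  have hdegnn : ∀ b, 0 ≤ deg b := fun b => Finset.sum_nonneg (fun a _ => by positivity)
  set S0 : Finset V2 := univ.filter (fun b => deg b ≤ 2*d*(n1:ℝ)) with hS0def
  -- Markov
  have hMarkov : (n2:ℝ)/2 ≤ S0.card := by
    by_contra hcon
    push_neg at hcon
    set S0c : Finset V2 := univ.filter (fun b => ¬ (deg b ≤ 2*d*(n1:ℝ))) with hS0c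
    have hsplit : S0.card + S0c.card = n2 := by
      rw [hS0def, hS0c]
      rw [Finset.card_filter_add_card_filter_not]
      exact card_univ
    have hccard : (n2:ℝ)/2 < S0c.card := by
      have : (S0.card:ℝ) + (S0c.card:ℝ) = (n2:ℝ) := by exact_mod_cast hsplit
      linarith
    have hne : S0c.Nonempty := by
      rw [← card_pos]
      by_contra h
      push_neg at h
      have h0 : S0c.card = 0 := by omega
      rw [h0] at hccard
      simp only [Nat.cast_zero] at hccard
      linarith
    have h1 : ∑ b ∈ S0c, (2*d*(n1:ℝ)) < ∑ b ∈ S0c, deg b := by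
      apply Finset.sum_lt_sum_of_nonempty hne
      intro b hb
      rw [hS0c, mem_filter] at hb
      push_neg at hb
      exact hb.2
    have h2 : ∑ b ∈ S0c, deg b ≤ ∑ b : V2, deg b :=
      Finset.sum_le_sum_of_subset_of_nonneg (subset_univ _) (fun b _ _ => hdegnn b)
    have h3 : ∑ b ∈ S0c, (2*d*(n1:ℝ)) = (S0c.card:ℝ) * (2*d*n1) := by
      rw [Finset.sum_const, nsmul_eq_mul]
    have h4 : (n1:ℝ)*n2/(16*C) ≤ (S0c.card:ℝ) * (2*d*n1) := by
      have : (n2:ℝ)/2 * (2*d*n1) ≤ (S0c.card:ℝ) * (2*d*n1) :=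
        mul_le_mul_of_nonneg_right (le_of_lt hccard) (by positivity)
      calc (n1:ℝ)*n2/(16*C) = (n2:ℝ)/2 * (2*d*n1) := by rw [hd]; field_simp
        _ ≤ _ := this
    rw [hdeg] at h2
    linarith
  -- run the greedy
  set t1 : ℕ := ⌈C * Real.logb 2 (n1:ℝ)⌉₊ with ht1
  have hL1 : (0:ℝ) ≤ Real.logb 2 (n1:ℝ) :=
    Real.logb_nonneg one_lt_two (by exact_mod_cast (by omega : 1 ≤ n1))
  have hCL1 : (0:ℝ) ≤ C * Real.logb 2 (n1:ℝ) := by positivity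
  obtain ⟨A, S, hA, hSsub, hScard, hAS⟩ := greedy E d (le_of_lt hd0) hd1 S0
    (fun b hb => by rw [hS0def, mem_filter] at hb; exact hb.2) t1 hceil
  refine ⟨A, S, ?_, ?_, hAS⟩
  · rw [hA]; exact Nat.le_ceil _
  -- analytic bound : (1-4d)^t1 ≥ n1^{-1/2}/√2
  have key : (n1:ℝ) ^ (-(1/2):ℝ) / Real.sqrt 2 ≤ (1-4*d)^t1 := by
    have hx0 : (0:ℝ) ≤ 4*d := by positivity
    have step1 : ((4:ℝ) ^ (-(4*d)))^t1 ≤ (1-4*d)^t1 :=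
      pow_le_pow_left₀ (Real.rpow_nonneg (by norm_num) _) (four_rpow_neg_le hx0 hd4) t1
    have step2 : ((4:ℝ) ^ (-(4*d)))^t1 = (4:ℝ) ^ (-(4*d*t1)) := by
      rw [← Real.rpow_natCast ((4:ℝ) ^ (-(4*d))) t1, ← Real.rpow_mul (by norm_num)]
      ring_nf
    have step3 : 4*d*t1 ≤ Real.logb 2 (n1:ℝ)/4 + 1/4 := by
      have hceil2 : (t1:ℝ) < C * Real.logb 2 (n1:ℝ) + 1 := Nat.ceil_lt_add_one hCL1
      have : 4*d*(t1:ℝ) ≤ 4*d*(C * Real.logb 2 (n1:ℝ) + 1) :=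
        mul_le_mul_of_nonneg_left (le_of_lt hceil2) hx0
      have heq : 4*d*(C * Real.logb 2 (n1:ℝ) + 1) = Real.logb 2 (n1:ℝ)/4 + 1/(4*C) := by
        rw [hd]; field_simp; ring
      have : 4*d*(t1:ℝ) ≤ Real.logb 2 (n1:ℝ)/4 + 1/(4*C) := by rw [heq] at this; exact this
      have h1C : 1/(4*C) ≤ 1/4 := by
        rw [div_le_div_iff₀ (by positivity) (by norm_num)]; nlinarith
      linarith
    have step4 : (4:ℝ) ^ (-(Real.logb 2 (n1:ℝ)/4 + 1/4)) ≤ (4:ℝ) ^ (-(4*d*t1)) :=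
      Real.rpow_le_rpow_of_exponent_le (by norm_num) (by linarith)
    have step5 : (4:ℝ) ^ (-(Real.logb 2 (n1:ℝ)/4 + 1/4)) = (n1:ℝ) ^ (-(1/2):ℝ) / Real.sqrt 2 := by
      have h4eq : (4:ℝ) = (2:ℝ) ^ (2:ℝ) := by
        have h := Real.rpow_natCast (2:ℝ) 2
        push_cast at h
        rw [h]; norm_num
      have e0 : ∀ w : ℝ, (4:ℝ) ^ w = (2:ℝ)^(2*w) := by
        intro w
        rw [h4eq, ← Real.rpow_mul (by norm_num : (0:ℝ) ≤ 2)]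
      rw [e0]
      rw [show (2:ℝ) * (-(Real.logb 2 (n1:ℝ)/4 + 1/4)) =
          Real.logb 2 (n1:ℝ) * (-(1/2)) + (-(1/2)) by ring]
      rw [Real.rpow_add (by norm_num : (0:ℝ) < 2), Real.rpow_mul (by norm_num : (0:ℝ) ≤ 2),
        Real.rpow_logb (by norm_num) (by norm_num) hn1pos]
      rw [Real.rpow_neg (by norm_num : (0:ℝ) ≤ 2), ← Real.sqrt_eq_rpow]
      rw [div_eq_mul_inv]
      ring
    linarith [step5 ▸ step4, step2 ▸ step1]
  -- finish
  have hfinal : C * Real.logb 2 (n2:ℝ) ≤ (S.card:ℝ) := by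
    have h1 : (n2:ℝ)/2 * ((n1:ℝ) ^ (-(1/2):ℝ) / Real.sqrt 2) ≤ (n2:ℝ)/2 * (1-4*d)^t1 :=
      mul_le_mul_of_nonneg_left key (by positivity)
    have h2 : (n2:ℝ)/2 * (1-4*d)^t1 ≤ (S0.card:ℝ) * (1-4*d)^t1 :=
      mul_le_mul_of_nonneg_right hMarkov (pow_nonneg (by linarith) t1)
    have h3 : (n2:ℝ)/2 * ((n1:ℝ) ^ (-(1/2):ℝ)) / Real.sqrt 2
        = (n2:ℝ)/2 * ((n1:ℝ) ^ (-(1/2):ℝ) / Real.sqrt 2) := by ring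
    linarith [hS, h1, h2, hScard, h3]
  exact hfinal

private lemma exists_good (C : ℝ) (hC : 1 < C) : ∃ nC : ℕ, ∀ n : ℕ, nC ≤ n →
    2 ≤ n ∧ 2 * ⌈C * Real.logb 2 (n:ℝ)⌉₊ ≤ n ∧
    2 * Real.sqrt 2 * (C * Real.logb 2 (n:ℝ)) ≤ (n:ℝ) ^ ((1:ℝ)/2) := by
  have hC0 : (0:ℝ) < C := by linarith
  have hl2 : (0:ℝ) < Real.log 2 := Real.log_pos one_lt_two
  have hs2 : (0:ℝ) < Real.sqrt 2 := Real.sqrt_pos.2 (by norm_num)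
  have e1 : ∀ᶠ x : ℝ in Filter.atTop, Real.log x ≤ (Real.log 2/(4*C)) * x := by
    have h := Asymptotics.IsLittleO.def Real.isLittleO_log_id_atTop
      (show (0:ℝ) < Real.log 2/(4*C) by positivity)
    filter_upwards [h, Filter.eventually_ge_atTop (0:ℝ)] with x hx hx0
    calc Real.log x ≤ |Real.log x| := le_abs_self _
      _ ≤ Real.log 2/(4*C) * |x| := by simpa [Real.norm_eq_abs] using hx
      _ = Real.log 2/(4*C) * x := by rw [abs_of_nonneg hx0]
  have e2 : ∀ᶠ x : ℝ in Filter.atTop,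
      Real.log x ≤ (Real.log 2/(2*Real.sqrt 2*C)) * x ^ ((1:ℝ)/2) := by
    have h := Asymptotics.IsLittleO.def
      (isLittleO_log_rpow_atTop (show (0:ℝ) < 1/2 by norm_num))
      (show (0:ℝ) < Real.log 2/(2*Real.sqrt 2*C) by positivity)
    filter_upwards [h, Filter.eventually_ge_atTop (0:ℝ)] with x hx hx0
    have habs : |x ^ ((1:ℝ)/2)| = x ^ ((1:ℝ)/2) := abs_of_nonneg (Real.rpow_nonneg hx0 _)
    calc Real.log x ≤ |Real.log x| := le_abs_self _
      _ ≤ Real.log 2/(2*Real.sqrt 2*C) * |x ^ ((1:ℝ)/2)| := by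
          simpa [Real.norm_eq_abs] using hx
      _ = Real.log 2/(2*Real.sqrt 2*C) * x ^ ((1:ℝ)/2) := by rw [habs]
  have e3 : ∀ᶠ x : ℝ in Filter.atTop, (8:ℝ) ≤ x := Filter.eventually_ge_atTop 8
  have hnat := (tendsto_natCast_atTop_atTop (R := ℝ)).eventually (e1.and (e2.and e3))
  rw [Filter.eventually_atTop] at hnat
  obtain ⟨nC, hnC⟩ := hnat
  refine ⟨nC, fun n hn => ?_⟩
  obtain ⟨h1, h2, h3⟩ := hnC n hn
  have hn1 : (1:ℝ) ≤ (n:ℝ) := by linarith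
  refine ⟨by exact_mod_cast (by linarith : (2:ℝ) ≤ (n:ℝ)), ?_, ?_⟩
  · have hLnn : 0 ≤ Real.logb 2 (n:ℝ) := Real.logb_nonneg one_lt_two hn1
    have hCL : C * Real.logb 2 (n:ℝ) ≤ (n:ℝ)/4 := by
      rw [Real.logb]
      calc C * (Real.log n / Real.log 2) = (C/Real.log 2) * Real.log n := by ring
        _ ≤ (C/Real.log 2) * ((Real.log 2/(4*C)) * n) :=
            mul_le_mul_of_nonneg_left h1 (by positivity)
        _ = n/4 := by field_simp
    have hceil : (⌈C * Real.logb 2 (n:ℝ)⌉₊ : ℝ) < C * Real.logb 2 (n:ℝ) + 1 :=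
      Nat.ceil_lt_add_one (by positivity)
    have hlt : (2 * ⌈C * Real.logb 2 (n:ℝ)⌉₊ : ℝ) < n := by push_cast; linarith
    exact_mod_cast hlt.le
  · calc 2*Real.sqrt 2*(C * Real.logb 2 (n:ℝ))
        = (2*Real.sqrt 2*C/Real.log 2) * Real.log n := by rw [Real.logb]; field_simp
      _ ≤ (2*Real.sqrt 2*C/Real.log 2) * ((Real.log 2/(2*Real.sqrt 2*C)) * (n:ℝ)^((1:ℝ)/2)) :=
          mul_le_mul_of_nonneg_left h2 (by positivity)
      _ = (n:ℝ)^((1:ℝ)/2) := by field_simp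

private lemma hS_aux {C : ℝ} {m n : ℕ} (hm2 : 2 ≤ m) (hle : m ≤ n)
    (hsq : 2 * Real.sqrt 2 * (C * Real.logb 2 (n:ℝ)) ≤ (n:ℝ) ^ ((1:ℝ)/2)) :
    C * Real.logb 2 (n:ℝ) ≤ (n:ℝ)/2 * ((m:ℝ) ^ (-(1/2):ℝ)) / Real.sqrt 2 := by
  have hmp : (0:ℝ) < m := by exact_mod_cast (by omega : 0 < m)
  have hnp : (0:ℝ) < n := by
    have : (0:ℝ) < m := hmp
    have h := Nat.cast_le (α := ℝ).2 hle
    linarith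
  have hs2 : (0:ℝ) < Real.sqrt 2 := Real.sqrt_pos.2 (by norm_num)
  have hanti : (n:ℝ) ^ (-(1/2):ℝ) ≤ (m:ℝ) ^ (-(1/2):ℝ) :=
    Real.rpow_le_rpow_of_nonpos hmp (by exact_mod_cast hle) (by norm_num)
  have hmul : (n:ℝ) * (n:ℝ) ^ (-(1/2):ℝ) = (n:ℝ) ^ ((1:ℝ)/2) := by
    nth_rewrite 1 [← Real.rpow_one (n:ℝ)]
    rw [← Real.rpow_add hnp]
    norm_num
  have h1 : C * Real.logb 2 (n:ℝ) ≤ (n:ℝ) ^ ((1:ℝ)/2) / (2 * Real.sqrt 2) := by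
    rw [le_div_iff₀ (by positivity)]
    linarith
  have h2 : (n:ℝ) ^ ((1:ℝ)/2) / (2 * Real.sqrt 2) = (n:ℝ)/2 * ((n:ℝ) ^ (-(1/2):ℝ)) / Real.sqrt 2 := by
    rw [← hmul]; ring
  have h3 : (n:ℝ)/2 * ((n:ℝ) ^ (-(1/2):ℝ)) / Real.sqrt 2
      ≤ (n:ℝ)/2 * ((m:ℝ) ^ (-(1/2):ℝ)) / Real.sqrt 2 := by
    gcongr
  linarith [h2 ▸ h1]

private lemma exists_empty {V1 V2 : Type} [Fintype V1] [Fintype V2] (E : V1 → V2 → Prop)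
    [∀ a b, Decidable (E a b)] (C : ℝ) (hC : 1 < C)
    (g1 : 2 ≤ Fintype.card V1 ∧ 2 * ⌈C * Real.logb 2 (Fintype.card V1 : ℕ)⌉₊ ≤ Fintype.card V1 ∧
      2 * Real.sqrt 2 * (C * Real.logb 2 (Fintype.card V1 : ℕ)) ≤ (Fintype.card V1 : ℝ) ^ ((1:ℝ)/2))
    (g2 : 2 ≤ Fintype.card V2 ∧ 2 * ⌈C * Real.logb 2 (Fintype.card V2 : ℕ)⌉₊ ≤ Fintype.card V2 ∧
      2 * Real.sqrt 2 * (C * Real.logb 2 (Fintype.card V2 : ℕ)) ≤ (Fintype.card V2 : ℝ) ^ ((1:ℝ)/2))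
    (hT : (∑ b : V2, ∑ a : V1, (if E a b then (1:ℝ) else 0)) <
        (Fintype.card V1) * (Fintype.card V2) / (16*C)) :
    ∃ (A : Finset V1) (B : Finset V2),
      C * Real.logb 2 (Fintype.card V1) ≤ A.card ∧
      C * Real.logb 2 (Fintype.card V2) ≤ B.card ∧
      ∀ a ∈ A, ∀ b ∈ B, ¬ E a b := by
  classical
  obtain ⟨g11, g12, g13⟩ := g1
  obtain ⟨g21, g22, g23⟩ := g2
  by_cases hle : Fintype.card V1 ≤ Fintype.card V2
  · exact core E C hC g11 g21 g12 (hS_aux g11 hle g23) hT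
  · push_neg at hle
    have hle' : Fintype.card V2 ≤ Fintype.card V1 := hle.le
    have hT' : (∑ a : V1, ∑ b : V2, (if E a b then (1:ℝ) else 0)) <
        (Fintype.card V2) * (Fintype.card V1) / (16*C) := by
      rw [Finset.sum_comm]
      rw [show ((Fintype.card V2 : ℝ)) * (Fintype.card V1) = (Fintype.card V1 : ℝ) * (Fintype.card V2) from mul_comm _ _]
      exact hT
    obtain ⟨B, A, hB, hA, hAB⟩ :=
      core (fun (b : V2) (a : V1) => E a b) C hC g21 g11 g22 (hS_aux g21 hle' g13) hT'
    exact ⟨A, B, hA, hB, fun a ha b hb => hAB b hb a ha⟩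

theorem stmt0 (C : ℝ) (hC : 1 < C) :
    ∃ nC : ℕ, ∀ (V1 V2 : Type) [Fintype V1] [Fintype V2]
      (E : V1 → V2 → Prop) [∀ a b, Decidable (E a b)],
      nC ≤ Fintype.card V1 → nC ≤ Fintype.card V2 →
      BipRamsey E C →
      1 / (16 * C) ≤
          (((Finset.univ.filter (fun p : V1 × V2 => E p.1 p.2)).card : ℝ) /
            (Fintype.card V1 * Fintype.card V2)) ∧
      (((Finset.univ.filter (fun p : V1 × V2 => E p.1 p.2)).card : ℝ) /
            (Fintype.card V1 * Fintype.card V2)) ≤ 1 - 1 / (16 * C) := by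
  classical
  have hC0 : (0:ℝ) < C := by linarith
  obtain ⟨nC0, hgood⟩ := exists_good C hC
  refine ⟨nC0, ?_⟩
  intro V1 V2 _ _ E _ h1 h2 hG
  obtain ⟨g11, g12, g13⟩ := hgood _ h1
  obtain ⟨g21, g22, g23⟩ := hgood _ h2
  set n1 := Fintype.card V1 with hn1
  set n2 := Fintype.card V2 with hn2
  have hn1p : (0:ℝ) < n1 := by exact_mod_cast (by omega : 0 < n1)
  have hn2p : (0:ℝ) < n2 := by exact_mod_cast (by omega : 0 < n2)
  have hprod : (0:ℝ) < (n1:ℝ)*(n2:ℝ) := by positivity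
  set T : ℝ := ((Finset.univ.filter (fun p : V1 × V2 => E p.1 p.2)).card : ℝ) with hTdef
  have hTsum : T = ∑ b : V2, ∑ a : V1, (if E a b then (1:ℝ) else 0) := by
    rw [hTdef, Finset.card_filter]
    push_cast
    rw [Fintype.sum_prod_type]
    exact Finset.sum_comm
  constructor
  · by_contra hcon
    push_neg at hcon
    have hTlt : (∑ b : V2, ∑ a : V1, (if E a b then (1:ℝ) else 0)) < (n1:ℝ)*(n2:ℝ)/(16*C) := by
      rw [← hTsum]
      rw [lt_div_iff₀ (by positivity : (0:ℝ) < 16*C)]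
      have h := (div_lt_div_iff₀ hprod (by positivity : (0:ℝ) < 16*C)).1 hcon
      linarith
    obtain ⟨A, B, hA, hB, hAB⟩ := exists_empty E C hC ⟨g11, g12, g13⟩ ⟨g21, g22, g23⟩ hTlt
    exact hG A B hA hB (Or.inr hAB)
  · by_contra hcon
    push_neg at hcon
    have hpt : ∀ (b:V2) (a:V1), (if ¬ E a b then (1:ℝ) else 0) = 1 - (if E a b then (1:ℝ) else 0) := by
      intro b a; by_cases h : E a b <;> simp [h]
    have hsumneg : (∑ b : V2, ∑ a : V1, (if ¬ E a b then (1:ℝ) else 0))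
        = (n1:ℝ)*(n2:ℝ) - ∑ b : V2, ∑ a : V1, (if E a b then (1:ℝ) else 0) := by
      simp_rw [hpt, Finset.sum_sub_distrib, Finset.sum_const, card_univ, nsmul_eq_mul, mul_one]
      ring
    have hTgt : ((1:ℝ) - 1/(16*C)) * ((n1:ℝ)*(n2:ℝ)) < T := (lt_div_iff₀ hprod).1 hcon
    have hTlt : (∑ b : V2, ∑ a : V1, (if ¬ E a b then (1:ℝ) else 0)) < (n1:ℝ)*(n2:ℝ)/(16*C) := by
      rw [hsumneg, ← hTsum]
      have : ((1:ℝ) - 1/(16*C)) * ((n1:ℝ)*(n2:ℝ)) = (n1:ℝ)*(n2:ℝ) - (n1:ℝ)*(n2:ℝ)/(16*C) := by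
        field_simp
      linarith
    obtain ⟨A, B, hA, hB, hAB⟩ := exists_empty (fun a b => ¬ E a b) C hC
      ⟨g11, g12, g13⟩ ⟨g21, g22, g23⟩ hTlt
    exact hG A B hA hB (Or.inl (fun a ha b hb => not_not.1 (hAB a ha b hb)))
end

section
/- For all δ, B > 0 there exist C, d₀ ≥ 1 such that the following holds. Suppose A₁, …, A_K are subsets of the integer interval [−M, M] with K ≥ CM and |A_i| ≥ δM ≥ 2 for all i ∈ [K]. Then there exist a ∈ ℤ and d ∈ ℕ with 1 ≤ d ≤ d₀ such that the arithmetic progression {a + i·d : 0 ≤ i ≤ BM²} is contained in the sumset A₁ + A₂ + ⋯ + A_K. -/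
set_option maxHeartbeats 1000000

open Finset

lemma lemA2 {ι : Type*} [DecidableEq ι] (t : ι → ℕ) (L : ℕ) (v : Finset ι)
    (hv : ∀ j ∈ v, t j ≤ L + 1) (s : ℕ) (hs : s ≤ L + ∑ j ∈ v, t j) :
    ∃ ε : ι → ℕ, (∀ j ∈ v, ε j = 0 ∨ ε j = t j) ∧ ∑ j ∈ v, ε j ≤ s ∧ s ≤ L + ∑ j ∈ v, ε j := by
  induction v using Finset.induction_on generalizing s with
  | empty =>
    exact ⟨fun _ => 0, by simp, by simpa using hs⟩
  | @insert a v ha ih =>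
    have hva : ∀ j ∈ v, t j ≤ L + 1 := fun j hj => hv j (Finset.mem_insert_of_mem hj)
    rw [Finset.sum_insert ha] at hs
    by_cases hcase : s ≤ L + ∑ j ∈ v, t j
    · obtain ⟨ε, hε, h1, h2⟩ := ih hva s hcase
      refine ⟨fun j => if j = a then 0 else ε j, ?_, ?_, ?_⟩
      · intro j hj
        by_cases hja : j = a
        · simp [hja]
        · simpa [hja] using hε j (Finset.mem_insert.mp hj |>.resolve_left hja)
      · rw [Finset.sum_insert ha, if_pos rfl]
        calc 0 + ∑ j ∈ v, (if j = a then 0 else ε j) = ∑ j ∈ v, ε j := by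
              rw [zero_add]; exact Finset.sum_congr rfl fun j hj => if_neg (fun h => ha (by rwa [h] at hj))
          _ ≤ s := h1
      · rw [Finset.sum_insert ha, if_pos rfl]
        have : ∑ j ∈ v, (if j = a then 0 else ε j) = ∑ j ∈ v, ε j :=
          Finset.sum_congr rfl fun j hj => if_neg (fun h => ha (by rwa [h] at hj))
        omega
    · push_neg at hcase
      have hta : t a ≤ L + 1 := hv a (Finset.mem_insert_self a v)
      have hta_le : t a ≤ s := by omega
      obtain ⟨ε, hε, h1, h2⟩ := ih hva (s - t a) (by omega)
      refine ⟨fun j => if j = a then t a else ε j, ?_, ?_, ?_⟩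
      · intro j hj
        by_cases hja : j = a
        · simp [hja]
        · simpa [hja] using hε j (Finset.mem_insert.mp hj |>.resolve_left hja)
      · rw [Finset.sum_insert ha, if_pos rfl]
        have : ∑ j ∈ v, (if j = a then t a else ε j) = ∑ j ∈ v, ε j :=
          Finset.sum_congr rfl fun j hj => if_neg (fun h => ha (by rwa [h] at hj))
        omega
      · rw [Finset.sum_insert ha, if_pos rfl]
        have : ∑ j ∈ v, (if j = a then t a else ε j) = ∑ j ∈ v, ε j :=
          Finset.sum_congr rfl fun j hj => if_neg (fun h => ha (by rwa [h] at hj))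
        omega

lemma lemA {ι : Type*} [DecidableEq ι] (u P : Finset ι) (hPu : P ⊆ u) (t : ι → ℕ)
    (hP : ∀ j ∈ P, t j = 1) (hvb : ∀ j ∈ u, j ∉ P → t j ≤ P.card + 1) (s : ℕ)
    (hs : s ≤ ∑ j ∈ u, t j) :
    ∃ ε : ι → ℕ, (∀ j ∈ u, ε j = 0 ∨ ε j = t j) ∧ ∑ j ∈ u, ε j = s := by
  have hsplit : ∑ j ∈ u \ P, t j + ∑ j ∈ P, t j = ∑ j ∈ u, t j := Finset.sum_sdiff hPu
  have hPsum : ∑ j ∈ P, t j = P.card := by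
    rw [Finset.sum_congr rfl hP, Finset.sum_const, smul_eq_mul, mul_one]
  have hv : ∀ j ∈ u \ P, t j ≤ P.card + 1 := by
    intro j hj
    rw [Finset.mem_sdiff] at hj
    exact hvb j hj.1 hj.2
  obtain ⟨ε₀, hε₀, h1, h2⟩ := lemA2 t P.card (u \ P) hv s (by omega)
  set r := s - ∑ j ∈ u \ P, ε₀ j with hr
  have hrP : r ≤ P.card := by omega
  obtain ⟨Q, hQP, hQcard⟩ := Finset.exists_subset_card_eq hrP
  refine ⟨fun j => if j ∈ P then (if j ∈ Q then 1 else 0) else ε₀ j, ?_, ?_⟩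
  · intro j hj
    by_cases hjP : j ∈ P
    · by_cases hjQ : j ∈ Q
      · right; simp [hjP, hjQ, hP j hjP]
      · left; simp [hjP, hjQ]
    · simpa [hjP] using hε₀ j (Finset.mem_sdiff.mpr ⟨hj, hjP⟩)
  · show ∑ j ∈ u, (if j ∈ P then (if j ∈ Q then (1:ℕ) else 0) else ε₀ j) = s
    have hsplit2 : ∑ j ∈ u \ P, (if j ∈ P then (if j ∈ Q then (1:ℕ) else 0) else ε₀ j)
        + ∑ j ∈ P, (if j ∈ P then (if j ∈ Q then (1:ℕ) else 0) else ε₀ j)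
        = ∑ j ∈ u, (if j ∈ P then (if j ∈ Q then (1:ℕ) else 0) else ε₀ j) :=
      Finset.sum_sdiff hPu
    have e1 : ∑ j ∈ u \ P, (if j ∈ P then (if j ∈ Q then 1 else 0) else ε₀ j) = ∑ j ∈ u \ P, ε₀ j :=
      Finset.sum_congr rfl fun j hj => if_neg (Finset.mem_sdiff.mp hj).2
    have e2 : ∑ j ∈ P, (if j ∈ P then (if j ∈ Q then 1 else 0) else ε₀ j)
        = ∑ j ∈ P, (if j ∈ Q then (1:ℕ) else 0) :=
      Finset.sum_congr rfl fun j hj => if_pos hj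
    have e3 : ∑ j ∈ P, (if j ∈ Q then (1:ℕ) else 0) = r := by
      rw [← Finset.card_filter]
      rw [Finset.filter_mem_eq_inter, Finset.inter_eq_right.mpr hQP, hQcard]
    omega

-- small gap pair
lemma lemB (M g : ℕ) (hg : 1 ≤ g) (A : Finset ℤ)
    (hA : A ⊆ Finset.Icc (-(M:ℤ)) M) (hcard : 2*M + 1 ≤ g * (A.card - 1)) :
    ∃ x ∈ A, ∃ e : ℕ, 1 ≤ e ∧ e ≤ g ∧ x + (e:ℤ) ∈ A := by
  have hg0 : (0:ℤ) < g := by exact_mod_cast hg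
  have hn2 : 2 ≤ A.card := by
    rcases Nat.lt_or_ge A.card 2 with h | h
    · exfalso; interval_cases h' : A.card <;> omega
    · exact h
  have hmaps : ∀ x ∈ A, (x + M) / g ∈ Finset.Icc (0:ℤ) ((2*M)/g) := by
    intro x hx
    have hx' := hA hx
    rw [Finset.mem_Icc] at hx' ⊢
    exact ⟨Int.ediv_nonneg (by omega) (le_of_lt hg0), Int.ediv_le_ediv hg0 (by omega)⟩
  have hcardlt : (Finset.Icc (0:ℤ) ((2*M)/g)).card < A.card := by
    rw [Int.card_Icc]
    have hc : ((A.card - 1 : ℕ) : ℤ) = (A.card : ℤ) - 1 := by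
      have h1 : 1 ≤ A.card := by omega
      push_cast [h1]; ring
    have h1 : (2*(M:ℤ) + 1) ≤ (g:ℤ) * ((A.card:ℤ) - 1) := by
      rw [← hc]; exact_mod_cast hcard
    have h2 : (2*(M:ℤ))/g < (A.card:ℤ) - 1 := by
      rw [Int.ediv_lt_iff_lt_mul hg0]; nlinarith
    have h4 : (0:ℤ) ≤ (2*(M:ℤ))/g := Int.ediv_nonneg (by positivity) (le_of_lt hg0)
    omega
  obtain ⟨x, hx, y, hy, hxy, hfeq⟩ :=
    Finset.exists_ne_map_eq_of_card_lt_of_maps_to hcardlt hmaps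
  -- wlog x < y
  wlog hlt : x < y generalizing x y
  · exact this y hy x hx hxy.symm hfeq.symm (by omega)
  have hdx := Int.mul_ediv_add_emod (x + M) g
  have hdy := Int.mul_ediv_add_emod (y + M) g
  have hrx0 : 0 ≤ (x + M) % g := Int.emod_nonneg _ (by omega)
  have hrxg : (x + M) % g < g := Int.emod_lt_of_pos _ hg0
  have hry0 : 0 ≤ (y + M) % g := Int.emod_nonneg _ (by omega)
  have hryg : (y + M) % g < g := Int.emod_lt_of_pos _ hg0
  have hband : 0 < y - x ∧ y - x ≤ g := by
    rw [hfeq] at hdx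
    omega
  refine ⟨x, hx, (y - x).toNat, by omega, by omega, ?_⟩
  have : x + ((y - x).toNat : ℤ) = y := by omega
  rwa [this]

-- residue class pair
lemma lemC (M d : ℕ) (hd : 1 ≤ d) (A : Finset ℤ)
    (hA : A ⊆ Finset.Icc (-(M:ℤ)) M) (hne : A.Nonempty) :
    ∃ x ∈ A, ∃ t : ℕ, x + (d:ℤ)*t ∈ A ∧ d*t ≤ 2*M ∧ A.card ≤ d*(t+1) := by
  have hd0 : (0:ℤ) < d := by exact_mod_cast hd
  have hn1 : 1 ≤ A.card := Finset.card_pos.mpr hne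
  have hmaps : ∀ x ∈ A, x % d ∈ Finset.Ico (0:ℤ) d := by
    intro x hx
    rw [Finset.mem_Ico]
    exact ⟨Int.emod_nonneg _ (by omega), Int.emod_lt_of_pos _ hd0⟩
  have hlt : (Finset.Ico (0:ℤ) (d:ℤ)).card * ((A.card - 1)/d) < A.card := by
    rw [Int.card_Ico]
    have h1 : ((A.card - 1)/d) * d ≤ A.card - 1 := Nat.div_mul_le_self _ _
    have h2 : ((d:ℤ) - 0).toNat = d := by omega
    rw [h2]
    calc d * ((A.card - 1)/d) = ((A.card - 1)/d) * d := mul_comm _ _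
      _ ≤ A.card - 1 := h1
      _ < A.card := by omega
  obtain ⟨r, _, hfib⟩ := Finset.exists_lt_card_fiber_of_mul_lt_card_of_maps_to hmaps hlt
  set F := A.filter (fun x => x % d = r) with hF
  have hFA : F ⊆ A := Finset.filter_subset _ _
  have hFne : F.Nonempty := Finset.card_pos.mp (Nat.lt_of_le_of_lt (Nat.zero_le _) hfib)
  set x := F.min' hFne with hxdef
  set y := F.max' hFne with hydef
  have hxF : x ∈ F := F.min'_mem hFne
  have hyF : y ∈ F := F.max'_mem hFne
  have hxr : x % d = r := (Finset.mem_filter.mp hxF).2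
  have hyr : y % d = r := (Finset.mem_filter.mp hyF).2
  have hxy : x ≤ y := F.min'_le _ hyF
  have hdvd : (d:ℤ) ∣ y - x := by
    have : (y - x) % d = 0 := by
      rw [Int.sub_emod, hxr, hyr, sub_self, Int.zero_emod]
    exact Int.dvd_of_emod_eq_zero this
  obtain ⟨w, hw⟩ := hdvd
  have hw0 : 0 ≤ w := by nlinarith
  set t := w.toNat with ht
  have hwt : (t:ℤ) = w := Int.toNat_of_nonneg hw0
  have hyx : x + (d:ℤ)*t = y := by rw [hwt]; omega
  -- card bound: F.card ≤ t + 1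
  have hcardF : F.card ≤ t + 1 := by
    have hinj : ∀ z ∈ F, ((z - x)/d).toNat ∈ Finset.range (t+1) := by
      intro z hz
      have hzr : z % d = r := (Finset.mem_filter.mp hz).2
      have hdvdz : (d:ℤ) ∣ z - x := by
        apply Int.dvd_of_emod_eq_zero
        rw [Int.sub_emod, hxr, hzr, sub_self, Int.zero_emod]
      obtain ⟨v, hv⟩ := hdvdz
      have hxz : x ≤ z := F.min'_le _ hz
      have hzy : z ≤ y := F.le_max' _ hz
      have hv0 : 0 ≤ v := by nlinarith
      have hvw : v ≤ w := by nlinarith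
      have : (z - x)/d = v := by rw [hv]; exact Int.mul_ediv_cancel_left _ (by omega)
      rw [this, Finset.mem_range]
      omega
    have hinj2 : ∀ z₁ ∈ F, ∀ z₂ ∈ F, ((z₁ - x)/d).toNat = ((z₂ - x)/d).toNat → z₁ = z₂ := by
      intro z₁ h₁ z₂ h₂ heq
      have d1 : (d:ℤ) ∣ z₁ - x := by
        apply Int.dvd_of_emod_eq_zero
        rw [Int.sub_emod, hxr, (Finset.mem_filter.mp h₁).2, sub_self, Int.zero_emod]
      have d2 : (d:ℤ) ∣ z₂ - x := by
        apply Int.dvd_of_emod_eq_zero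
        rw [Int.sub_emod, hxr, (Finset.mem_filter.mp h₂).2, sub_self, Int.zero_emod]
      obtain ⟨v₁, hv₁⟩ := d1
      obtain ⟨v₂, hv₂⟩ := d2
      have e1 : (z₁ - x)/d = v₁ := by rw [hv₁]; exact Int.mul_ediv_cancel_left _ (by omega)
      have e2 : (z₂ - x)/d = v₂ := by rw [hv₂]; exact Int.mul_ediv_cancel_left _ (by omega)
      have g1 : x ≤ z₁ := F.min'_le _ h₁
      have g2 : x ≤ z₂ := F.min'_le _ h₂
      have hv01 : 0 ≤ v₁ := by nlinarith
      have hv02 : 0 ≤ v₂ := by nlinarith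
      rw [e1, e2] at heq
      have hveq : v₁ = v₂ := by
        rw [← Int.toNat_of_nonneg hv01, ← Int.toNat_of_nonneg hv02, heq]
      rw [hveq] at hv₁
      omega
    calc F.card ≤ (Finset.range (t+1)).card := by
          apply Finset.card_le_card_of_injOn _ hinj
          intro z₁ h₁ z₂ h₂ h
          exact hinj2 z₁ (by simpa using h₁) z₂ (by simpa using h₂) h
      _ = t + 1 := Finset.card_range _
  have hdm : A.card ≤ d * F.card := by
    have hq := Nat.div_add_mod (A.card - 1) d
    have hrlt : (A.card - 1) % d < d := Nat.mod_lt _ (by omega)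
    have hq1 : (A.card - 1)/d + 1 ≤ F.card := hfib
    calc A.card ≤ d * ((A.card - 1)/d) + d := by omega
      _ = d * ((A.card - 1)/d + 1) := by ring
      _ ≤ d * F.card := Nat.mul_le_mul_left _ hq1
  have hxA : x ∈ A := hFA hxF
  have hyA : y ∈ A := hFA hyF
  refine ⟨x, hxA, t, by rw [hyx]; exact hyA, ?_, ?_⟩
  · have hx' := hA hxA
    have hy' := hA hyA
    rw [Finset.mem_Icc] at hx' hy'
    have : (d:ℤ) * t = y - x := by omega
    have h2M : (d:ℤ)*t ≤ 2*M := by omega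
    exact_mod_cast h2M
  · calc A.card ≤ d * F.card := hdm
      _ ≤ d * (t+1) := Nat.mul_le_mul_left _ hcardF

lemma assemble {K : ℕ} (A : Fin K → Finset ℤ) (d : ℕ) (x' : Fin K → ℤ) (t : Fin K → ℕ)
    (hx' : ∀ j, x' j ∈ A j) (hpair : ∀ j, x' j + (d:ℤ) * (t j : ℤ) ∈ A j)
    (P : Finset (Fin K)) (hP : ∀ j ∈ P, t j = 1) (hv : ∀ j, j ∉ P → t j ≤ P.card + 1)
    (i : ℕ) (hi : i ≤ ∑ j, t j) :
    ∃ f : Fin K → ℤ, (∀ j, f j ∈ A j) ∧ (∑ j, f j) = (∑ j, x' j) + (i:ℤ) * (d:ℤ) := by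
  obtain ⟨ε, hε, hsum⟩ := lemA univ P (subset_univ P) t hP (fun j _ hj => hv j hj) i hi
  refine ⟨fun j => x' j + (d:ℤ) * (ε j : ℤ), ?_, ?_⟩
  · intro j
    rcases hε j (mem_univ j) with h | h
    · simpa [h] using hx' j
    · simp only []; rw [h]; exact hpair j
  · rw [Finset.sum_add_distrib, ← Finset.mul_sum]
    have h2 : ∑ j, ((ε j : ℤ)) = (i:ℤ) := by
      rw [← Nat.cast_sum, hsum]
    rw [h2]; ring

theorem stmt7 (δ B : ℝ) (hδ : 0 < δ) (hB : 0 < B) :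
    ∃ (C : ℝ) (d0 : ℕ), 1 ≤ C ∧ 1 ≤ d0 ∧
      ∀ (M K : ℕ) (A : Fin K → Finset ℤ),
        C * M ≤ (K : ℝ) →
        (∀ i, A i ⊆ Finset.Icc (-(M : ℤ)) (M : ℤ)) →
        (∀ i, δ * M ≤ ((A i).card : ℝ)) →
        (2 : ℝ) ≤ δ * M →
        ∃ (a : ℤ) (d : ℕ), 1 ≤ d ∧ d ≤ d0 ∧
          ∀ i : ℕ, (i : ℝ) ≤ B * M ^ 2 →
            ∃ f : Fin K → ℤ, (∀ j, f j ∈ A j) ∧ (∑ j, f j) = a + i * d := by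
  classical
  set g : ℕ := ⌈(4:ℝ)/δ⌉₊ + 1 with hgdef
  have hg1 : 1 ≤ g := Nat.le_add_left 1 _
  have hgR : (0:ℝ) < g := by exact_mod_cast hg1
  have hg4 : (4:ℝ)/δ + 1 ≤ (g:ℝ) := by
    have h := Nat.le_ceil ((4:ℝ)/δ)
    rw [hgdef]
    push_cast
    linarith
  set C : ℝ := 6 + 3*g + 2*g^2*B/δ + 4*g*B/δ with hCdef
  have hpos1 : (0:ℝ) ≤ 3*(g:ℝ) := by positivity
  have hpos2 : (0:ℝ) ≤ 2*(g:ℝ)^2*B/δ := by positivity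
  have hpos3 : (0:ℝ) ≤ 4*(g:ℝ)*B/δ := by positivity
  have hC6 : (6:ℝ) ≤ C := by rw [hCdef]; linarith
  have hC1 : (1:ℝ) ≤ C := by linarith
  have hC3g : 3*(g:ℝ) ≤ C := by rw [hCdef]; linarith
  have hCge : 2*(g:ℝ)^2*B/δ ≤ C := by rw [hCdef]; linarith
  have hCB : 4*(g:ℝ)*B ≤ C*δ := by
    rw [hCdef]
    have e1 : (6 + 3*(g:ℝ) + 2*g^2*B/δ + 4*g*B/δ)*δ = 6*δ + 3*g*δ + 2*g^2*B + 4*g*B := by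
      field_simp
    rw [e1]
    have p1 : (0:ℝ) ≤ 6*δ := by positivity
    have p2 : (0:ℝ) ≤ 3*(g:ℝ)*δ := by positivity
    have p3 : (0:ℝ) ≤ 2*(g:ℝ)^2*B := by positivity
    linarith
  clear hCdef hgdef hpos1 hpos2 hpos3
  clear_value g C
  refine ⟨C, g, hC1, hg1, ?_⟩
  intro M K A hK hAIcc hAcard hδM
  -- basic facts
  have hM1 : 1 ≤ M := by
    rcases Nat.eq_zero_or_pos M with h | h
    · exfalso; rw [h] at hδM; simp at hδM; linarith
    · exact h
  have hMR : (1:ℝ) ≤ M := by exact_mod_cast hM1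
  have hMpos : (0:ℝ) < M := by linarith
  have hKR : C * M ≤ (K:ℝ) := hK
  have hK1 : 1 ≤ K := by
    have : (1:ℝ) ≤ K := by nlinarith
    exact_mod_cast this
  have hn2 : ∀ i, 2 ≤ (A i).card := by
    intro i
    have : (2:ℝ) ≤ ((A i).card : ℝ) := le_trans hδM (hAcard i)
    exact_mod_cast this
  -- small-gap pairs
  have hBi : ∀ i, 2*M + 1 ≤ g * ((A i).card - 1) := by
    intro i
    have h2 : 2 ≤ (A i).card := hn2 i
    have hnR : δ * M ≤ ((A i).card : ℝ) := hAcard i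
    have h2R : (2:ℝ) ≤ ((A i).card : ℝ) := by exact_mod_cast h2
    set n : ℝ := ((A i).card : ℝ) with hn
    have hhalf : δ*M/2 ≤ n - 1 := by linarith
    have e2 : (4/δ) * (δ*M/2) ≤ (4/δ) * (n-1) :=
      mul_le_mul_of_nonneg_left hhalf (by positivity)
    have e1 : (4/δ) * (δ*M/2) = 2*M := by field_simp; ring
    have e3 : ((4:ℝ)/δ + 1) * (n-1) ≤ (g:ℝ) * (n-1) :=
      mul_le_mul_of_nonneg_right hg4 (by linarith)
    have key : (2*M + 1 : ℝ) ≤ (g:ℝ) * (n - 1) := by nlinarith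
    have hc : (((A i).card - 1 : ℕ):ℝ) = n - 1 := by
      rw [hn]; push_cast [Nat.cast_sub (by omega : 1 ≤ (A i).card)]; ring
    have : (2*M + 1 : ℝ) ≤ (g:ℝ) * (((A i).card - 1 : ℕ):ℝ) := by rw [hc]; exact key
    exact_mod_cast this
  choose x hx e he1 heg hxe using fun i => lemB M g hg1 (A i) (hAIcc i) (hBi i)
  -- pigeonhole: common difference d
  have hmapse : ∀ i ∈ (univ : Finset (Fin K)), e i ∈ Finset.Icc 1 g :=
    fun i _ => Finset.mem_Icc.mpr ⟨he1 i, heg i⟩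
  have hltK : (Finset.Icc 1 g).card * ((K-1)/g) < (univ : Finset (Fin K)).card := by
    have hcardIcc : (Finset.Icc 1 g).card = g := by rw [Nat.card_Icc]; omega
    rw [hcardIcc, Finset.card_univ, Fintype.card_fin]
    have h1 := Nat.div_add_mod (K-1) g
    have h2 : (K-1) % g < g := Nat.mod_lt _ (by omega)
    omega
  obtain ⟨d, hdmem, hfibd⟩ :=
    Finset.exists_lt_card_fiber_of_mul_lt_card_of_maps_to hmapse hltK
  obtain ⟨hd1, hdg⟩ := Finset.mem_Icc.mp hdmem
  set S : Finset (Fin K) := univ.filter (fun i => e i = d) with hSdef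
  have hSK : K ≤ g * S.card := by
    have h1 := Nat.div_add_mod (K-1) g
    have h2 : (K-1) % g < g := Nat.mod_lt _ (by omega)
    have h3 : g * ((K-1)/g + 1) ≤ g * S.card := Nat.mul_le_mul_left _ hfibd
    have h4 : g * ((K-1)/g + 1) = g * ((K-1)/g) + g := by ring
    omega
  have hSKR : (K:ℝ) ≤ (g:ℝ) * (S.card:ℝ) := by exact_mod_cast hSK
  have hdR : (1:ℝ) ≤ (d:ℝ) := by exact_mod_cast hd1
  have hdgR : (d:ℝ) ≤ (g:ℝ) := by exact_mod_cast hdg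
  by_cases hMg : δ * (M:ℝ) < 2*g
  · -- small M case : use only the exact-d pairs
    set t : Fin K → ℕ := fun j => if e j = d then 1 else 0 with htdef
    have hsumt : ∑ j, t j = S.card := by
      rw [hSdef, Finset.card_filter]
    have hpair : ∀ j, x j + (d:ℤ) * (t j : ℤ) ∈ A j := by
      intro j
      by_cases hj : e j = d
      · have h5 : (d:ℤ) * ((t j : ℕ):ℤ) = (e j : ℤ) := by
          have : t j = 1 := by rw [htdef]; simp [hj]
          rw [this, hj]; ring
        rw [h5]; exact hxe j
      · have h5 : (d:ℤ) * ((t j : ℕ):ℤ) = 0 := by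
          have : t j = 0 := by rw [htdef]; simp [hj]
          rw [this]; ring
        rw [h5, add_zero]; exact hx j
    refine ⟨∑ j, x j, d, hd1, hdg, ?_⟩
    intro i hi
    have hit : i ≤ ∑ j, t j := by
      rw [hsumt]
      have hM2g : (M:ℝ) ≤ 2*g/δ := by
        rw [le_div_iff₀ hδ]
        linarith
      have s1 : (2*g^2*B/δ)*M ≤ (g:ℝ)*S.card := by
        have := mul_le_mul_of_nonneg_right hCge (le_of_lt hMpos)
        linarith
      have s2 := mul_le_mul_of_nonneg_left hM2g (show (0:ℝ) ≤ (g:ℝ)*B*M by positivity)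
      have e5 : (g:ℝ)*B*M * (2*g/δ) = 2*(g:ℝ)^2*B/δ*M := by ring
      rw [e5] at s2
      have key : (g:ℝ)*(B*M^2) ≤ (g:ℝ)*(S.card:ℝ) := by nlinarith [s1, s2]
      have key2 : B*(M:ℝ)^2 ≤ (S.card:ℝ) := le_of_mul_le_mul_left key hgR
      have : (i:ℝ) ≤ (S.card:ℝ) := le_trans hi key2
      exact_mod_cast this
    have hP1 : ∀ j ∈ S, t j = 1 := by
      intro j hj
      rw [hSdef, Finset.mem_filter] at hj
      rw [htdef]; simp [hj.2]
    have hv : ∀ j, j ∉ S → t j ≤ S.card + 1 := by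
      intro j hj
      show (if e j = d then 1 else 0) ≤ S.card + 1
      split <;> omega
    obtain ⟨f, hf1, hf2⟩ := assemble A d x t hx hpair S hP1 hv i hit
    exact ⟨f, hf1, hf2⟩
  · -- large M case
    push_neg at hMg
    have hAne : ∀ i, (A i).Nonempty := fun i => Finset.card_pos.mp (by have := hn2 i; omega)
    choose y hy τ hyτ hτ2M hcardτ using fun i => lemC M d hd1 (A i) (hAIcc i) (hAne i)
    have hS2M : 2*M + 1 ≤ S.card := by
      have hstep : ((2*M + 1 : ℕ):ℝ) ≤ (S.card:ℝ) := by
        push_cast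
        have h1 : (g:ℝ)*(2*M+1) ≤ 3*(g:ℝ)*M := by nlinarith
        have h2 : (3*(g:ℝ))*M ≤ C*M := mul_le_mul_of_nonneg_right hC3g (le_of_lt hMpos)
        have h3 : (g:ℝ)*(2*M+1) ≤ (g:ℝ)*S.card := by linarith
        nlinarith
      exact_mod_cast hstep
    obtain ⟨P, hPS, hPcard⟩ := Finset.exists_subset_card_eq hS2M
    set t : Fin K → ℕ := fun j => if j ∈ P then 1 else τ j with htdef
    set x' : Fin K → ℤ := fun j => if j ∈ P then x j else y j with hxdef
    have hx'mem : ∀ j, x' j ∈ A j := by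
      intro j
      show (if j ∈ P then x j else y j) ∈ A j
      split
      · exact hx j
      · exact hy j
    have hpair : ∀ j, x' j + (d:ℤ) * (t j : ℤ) ∈ A j := by
      intro j
      by_cases hj : j ∈ P
      · have hed : e j = d := by
          have hjS := hPS hj
          rw [hSdef, Finset.mem_filter] at hjS
          exact hjS.2
        have h1 : x' j = x j := by rw [hxdef]; simp [hj]
        have h2 : (d:ℤ) * ((t j : ℕ):ℤ) = (e j : ℤ) := by
          have : t j = 1 := by rw [htdef]; simp [hj]
          rw [this, hed]; ring
        rw [h1, h2]; exact hxe j
      · have h1 : x' j = y j := by rw [hxdef]; simp [hj]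
        have h2 : (t j : ℕ) = τ j := by rw [htdef]; simp [hj]
        rw [h1, h2]
        exact hyτ j
    have hP1 : ∀ j ∈ P, t j = 1 := by
      intro j hj; rw [htdef]; simp [hj]
    have hv : ∀ j, j ∉ P → t j ≤ P.card + 1 := by
      intro j hj
      have hτj : τ j ≤ 2*M := by
        have hb := hτ2M j
        have : τ j ≤ d * τ j := Nat.le_mul_of_pos_left _ (by omega)
        omega
      have h5 : t j = τ j := by rw [htdef]; simp [hj]
      rw [h5, hPcard]
      omega
    refine ⟨∑ j, x' j, d, hd1, hdg, ?_⟩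
    intro i hi
    -- lower bound on sum of t
    have hτR : ∀ j, δ*M/(2*g) ≤ (τ j : ℝ) := by
      intro j
      have hc := hcardτ j
      have hcR : ((A j).card : ℝ) ≤ (d:ℝ) * ((τ j : ℝ) + 1) := by exact_mod_cast hc
      have hn := hAcard j
      have hτ0 : (0:ℝ) ≤ (τ j : ℝ) := by positivity
      have h1 : δ*M ≤ (g:ℝ)*((τ j:ℝ)+1) := by nlinarith
      rw [div_le_iff₀ (by positivity : (0:ℝ) < 2*g)]
      nlinarith
    have hsumsplit : ∑ j ∈ (univ \ P), t j + ∑ j ∈ P, t j = ∑ j, t j :=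
      Finset.sum_sdiff (Finset.subset_univ P)
    have hsP : ∑ j ∈ P, t j = P.card := by
      rw [Finset.sum_congr rfl hP1, Finset.sum_const, smul_eq_mul, mul_one]
    have hsC : ∑ j ∈ (univ \ P), t j = ∑ j ∈ (univ \ P), τ j := by
      refine Finset.sum_congr rfl fun j hj => ?_
      rw [Finset.mem_sdiff] at hj
      rw [htdef]; simp [hj.2]
    have hcardC : (univ \ P).card = K - (2*M+1) := by
      rw [Finset.card_sdiff_of_subset (Finset.subset_univ P), Finset.card_univ, Fintype.card_fin, hPcard]
    have h2MK : 2*M+1 ≤ K := by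
      have hSle : S.card ≤ K := by simpa using Finset.card_le_univ S
      omega
    have hsumtau : ((K:ℝ) - (2*M+1)) * (δ*M/(2*g)) ≤ ((∑ j ∈ (univ \ P), τ j : ℕ) : ℝ) := by
      have hstep := Finset.card_nsmul_le_sum (univ \ P) (fun j => (τ j : ℝ)) (δ*M/(2*g))
        (fun j _ => hτR j)
      rw [hcardC, nsmul_eq_mul] at hstep
      have hcast : ((K - (2*M+1) : ℕ):ℝ) = (K:ℝ) - (2*M+1) := by
        push_cast [h2MK]; ring
      rw [hcast] at hstep
      calc ((K:ℝ) - (2*M+1)) * (δ*M/(2*g)) = ((K:ℝ) - (2*(M:ℝ)+1)) * (δ*M/(2*g)) := by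
            push_cast; ring
        _ ≤ ∑ j ∈ (univ \ P), ((τ j : ℕ):ℝ) := hstep
        _ = ((∑ j ∈ (univ \ P), τ j : ℕ) : ℝ) := by rw [Nat.cast_sum]
    have hit : i ≤ ∑ j, t j := by
      have e0 : ((∑ j, t j : ℕ):ℝ) = ((∑ j ∈ (univ \ P), τ j : ℕ):ℝ) + ((P.card : ℕ):ℝ) := by
        rw [← hsumsplit, hsC, hsP]; push_cast; ring
      have hb1 : (C/2)*M ≤ (K:ℝ) - (2*M+1) := by
        have hm1 : (C/2 - 3) * 1 ≤ (C/2 - 3)*M :=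
          mul_le_mul_of_nonneg_left hMR (by linarith)
        nlinarith
      have hb2 : B*M^2 ≤ (C/2)*M*(δ*M/(2*g)) := by
        have expand : (C/2)*(M:ℝ)*(δ*M/(2*g)) = (C*δ/(4*g))*M^2 := by
          field_simp; ring
        have hBle : B ≤ C*δ/(4*(g:ℝ)) := by
          rw [le_div_iff₀ (by positivity)]
          linarith
        calc B*(M:ℝ)^2 ≤ (C*δ/(4*g))*M^2 := mul_le_mul_of_nonneg_right hBle (sq_nonneg _)
          _ = (C/2)*M*(δ*M/(2*g)) := expand.symm
      have hfac : (0:ℝ) ≤ δ*M/(2*g) := by positivity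
      have hb3 : (C/2)*M*(δ*M/(2*g)) ≤ ((K:ℝ) - (2*M+1)) * (δ*M/(2*g)) :=
        mul_le_mul_of_nonneg_right hb1 hfac
      have hPc : (0:ℝ) ≤ ((P.card:ℕ):ℝ) := by positivity
      have key : (i:ℝ) ≤ ((∑ j, t j : ℕ):ℝ) := by
        rw [e0]
        linarith
      exact_mod_cast key
    obtain ⟨f, hf1, hf2⟩ := assemble A d x' t hx'mem hpair P hP1 hv i hit
    exact ⟨f, hf1, hf2⟩
end

section
/- Let a₁, …, a_n be nonzero real numbers, let α ∈ (0, 1/2], let p₁, …, p_n ∈ [α, 1−α], and let X₁, …, X_n be independent Bernoulli random variables with X_i ∼ Be(p_i). Then there exists a constant c(α) depending only on α such that for every x ∈ ℝ, the probability that a₁X₁ + ⋯ + a_nX_n = x is at most c(α)·n^{−1/2}. -/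
open MeasureTheory ProbabilityTheory Finset

lemma cb_sq (k : ℕ) : (Nat.centralBinom k)^2 * (2*k+1) ≤ 16^k := by
  induction k with
  | zero => simp [Nat.centralBinom]
  | succ k ih =>
    have h := Nat.succ_mul_centralBinom_succ k
    have hk : ((k+1) * Nat.centralBinom (k+1))^2 * (2*(k+1)+1) ≤ (k+1)^2 * 16^(k+1) := by
      rw [h]
      calc (2*(2*k+1)*Nat.centralBinom k)^2*(2*(k+1)+1)
          = (4*(2*k+1)*(2*k+3))*((Nat.centralBinom k)^2*(2*k+1)) := by ring
        _ ≤ (4*(2*k+1)*(2*k+3))*16^k := Nat.mul_le_mul_left _ ih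
        _ ≤ (16*(k+1)^2)*16^k := Nat.mul_le_mul_right _ (by nlinarith)
        _ = (k+1)^2 * 16^(k+1) := by ring
    have h2 : (k+1)^2 * ((Nat.centralBinom (k+1))^2 * (2*(k+1)+1)) ≤ (k+1)^2 * 16^(k+1) := by
      calc (k+1)^2 * ((Nat.centralBinom (k+1))^2 * (2*(k+1)+1))
          = ((k+1) * Nat.centralBinom (k+1))^2*(2*(k+1)+1) := by ring
        _ ≤ (k+1)^2 * 16^(k+1) := hk
    exact Nat.le_of_mul_le_mul_left h2 (by positivity)

-- real form: choose m (m/2) * sqrt (m+1) ≤ 2^m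

lemma sqrt_mul_le (c : ℝ) (j b : ℝ) (hc : 0 ≤ c) (hj : 0 ≤ j) (hb : 0 ≤ b)
    (h : c^2 * j ≤ b^2) : c * Real.sqrt j ≤ b := by
  have h2 : (c * Real.sqrt j)^2 ≤ b^2 := by
    rw [mul_pow, Real.sq_sqrt hj]; exact h
  exact (pow_le_pow_iff_left₀ (by positivity) hb two_ne_zero).mp h2

lemma choose_half_le (m : ℕ) : (m.choose (m/2) : ℝ) * Real.sqrt (m+1) ≤ 2^m := by
  rcases Nat.even_or_odd m with ⟨k, hk⟩ | ⟨k, hk⟩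
  · subst hk
    have hm : k + k = 2 * k := by ring
    rw [hm]
    have hc : (2*k).choose ((2*k)/2) = Nat.centralBinom k := by
      rw [Nat.centralBinom_eq_two_mul_choose]; congr 1; omega
    rw [hc]
    apply sqrt_mul_le _ _ _ (by positivity) (by positivity) (by positivity)
    have := cb_sq k
    have hcast : ((Nat.centralBinom k)^2 * (2*k+1) : ℝ) ≤ (16:ℝ)^k := by
      exact_mod_cast this
    calc ((Nat.centralBinom k : ℝ))^2 * ((2*k:ℕ)+1) ≤ (16:ℝ)^k := by push_cast at hcast ⊢; linarith
      _ = ((2:ℝ)^(2*k))^2 := by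
          rw [show (16:ℝ)=2^4 by norm_num, ← pow_mul, ← pow_mul]; congr 1; omega
  · subst hk
    have hdiv : (2*k+1)/2 = k := by omega
    rw [hdiv]
    have hcb : Nat.centralBinom (k+1) = 2 * (2*k+1).choose k := by
      rw [Nat.centralBinom_eq_two_mul_choose]
      have h1 : 2*(k+1) = (2*k+1)+1 := by ring
      rw [h1, Nat.choose_succ_succ]
      have h2 : (2*k+1).choose (k+1) = (2*k+1).choose k := by
        rw [← Nat.choose_symm (by omega)]; congr 1; omega
      rw [Nat.succ_eq_add_one, h2]; ring
    apply sqrt_mul_le _ _ _ (by positivity) (by positivity) (by positivity)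
    have h3 := cb_sq (k+1)
    rw [hcb] at h3
    have hcast : ((2 * (2*k+1).choose k)^2 * (2*(k+1)+1) : ℝ) ≤ (16:ℝ)^(k+1) := by exact_mod_cast h3
    have h16 : (16:ℝ)^(k+1) = 4 * ((2:ℝ)^(2*k+1))^2 := by
      rw [show (16:ℝ)=2^4 by norm_num, show (4:ℝ)=(2:ℝ)^2 by norm_num,
        ← pow_mul, ← pow_mul, ← pow_add]
      congr 1; omega
    push_cast at hcast
    rw [h16] at hcast
    push_cast
    nlinarith [Real.sq_sqrt (by positivity : (0:ℝ) ≤ 2*(k:ℝ)+1+1), sq_nonneg ((2*k+1).choose k : ℝ)]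

lemma count_LO {n : ℕ} (a : Fin n → ℝ) (ha : ∀ i, a i ≠ 0) (T : Finset (Fin n))
    (σ : Fin n → Bool) (y : ℝ) :
    (Finset.univ.filter (fun ε : Fin n → Bool =>
      (∀ i ∉ T, ε i = σ i) ∧ ∑ i ∈ T, a i * (if ε i then (1:ℝ) else 0) = y)).card
      ≤ T.card.choose (T.card / 2) := by
  classical
  set S := Finset.univ.filter (fun ε : Fin n → Bool =>
      (∀ i ∉ T, ε i = σ i) ∧ ∑ i ∈ T, a i * (if ε i then (1:ℝ) else 0) = y) with hS
  -- flipped bit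
  set e' : (Fin n → Bool) → Fin n → Bool := fun ε i => if a i < 0 then !(ε i) else ε i with he'
  set G : (Fin n → Bool) → Finset {i // i ∈ T} :=
    fun ε => T.attach.filter (fun i => e' ε i.1 = true) with hG
  -- sum identity
  have hsum : ∀ ε : Fin n → Bool, ∑ i ∈ T, a i * (if ε i then (1:ℝ) else 0)
      = (∑ s ∈ G ε, |a s.1|) + ∑ i ∈ T, min (a i) 0 := by
    intro ε
    have h1 : ∀ i ∈ T, a i * (if ε i then (1:ℝ) else 0)
        = |a i| * (if e' ε i then (1:ℝ) else 0) + min (a i) 0 := by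
      intro i _
      rcases lt_or_ge (a i) 0 with h | h
      · rw [min_eq_left h.le]
        by_cases hei : ε i <;> simp [he', h, hei, abs_of_neg h] <;> ring
      · rw [min_eq_right h]
        by_cases hei : ε i <;> simp [he', not_lt.mpr h, hei, abs_of_nonneg h]
    rw [Finset.sum_congr rfl h1, Finset.sum_add_distrib]
    congr 1
    rw [← Finset.sum_attach T (fun i => |a i| * (if e' ε i then (1:ℝ) else 0))]
    rw [hG, Finset.sum_filter]
    apply Finset.sum_congr rfl
    intro s _
    by_cases h : e' ε s.1 = true <;> simp [h]
  -- injectivity on S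
  have hinj : Set.InjOn G S := by
    intro ε hε δ hδ hGεδ
    simp only [hS, Finset.mem_coe, Finset.mem_filter] at hε hδ
    funext i
    by_cases hi : i ∈ T
    · have : (⟨i, hi⟩ : {i // i ∈ T}) ∈ G ε ↔ (⟨i, hi⟩ : {i // i ∈ T}) ∈ G δ := by rw [hGεδ]
      simp only [hG, Finset.mem_filter, Finset.mem_attach, true_and] at this
      by_cases hai : a i < 0 <;> simp [he', hai] at this <;>
        · cases hε' : ε i <;> cases hδ' : δ i <;> simp_all
    · rw [hε.2.1 i hi, hδ.2.1 i hi]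
  -- antichain
  have hanti : IsAntichain (· ⊆ ·) ((S.image G : Finset (Finset {i // i ∈ T})) : Set (Finset {i // i ∈ T})) := by
    intro s hs t ht hst hsub
    simp only [Finset.coe_image, Set.mem_image, Finset.mem_coe] at hs ht
    obtain ⟨ε, hε, rfl⟩ := hs
    obtain ⟨δ, hδ, rfl⟩ := ht
    simp only [hS, Finset.mem_filter] at hε hδ
    have h1 : (∑ s ∈ G ε, |a s.1|) = (∑ s ∈ G δ, |a s.1|) := by
      have hε2 := (hsum ε).symm.trans hε.2.2
      have hδ2 := (hsum δ).symm.trans hδ.2.2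
      linarith
    have h2 : (∑ s ∈ G ε, |a s.1|) < (∑ s ∈ G δ, |a s.1|) := by
      obtain ⟨j, hjt, hjs⟩ := Finset.exists_of_ssubset (hsub.ssubset_of_ne hst)
      exact Finset.sum_lt_sum_of_subset hsub hjt hjs (abs_pos.mpr (ha j.1))
        (fun k _ _ => abs_nonneg _)
    linarith
  calc S.card = (S.image G).card := (Finset.card_image_of_injOn hinj).symm
    _ ≤ (Fintype.card {i // i ∈ T}).choose ((Fintype.card {i // i ∈ T}) / 2) := IsAntichain.sperner hanti
    _ = T.card.choose (T.card / 2) := by rw [Fintype.card_coe]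

lemma sumB {n : ℕ} {α : ℝ} (T : Finset (Fin n))
    (r : Fin n → Bool → ℝ) (hr1 : ∀ i, r i false + r i true = 1 - 2*α) :
    ∑ σ ∈ Finset.univ.filter (fun σ : Fin n → Bool => ∀ i ∈ T, σ i = false),
      ∏ i ∈ Tᶜ, r i (σ i) = (1 - 2*α)^(Tᶜ.card) := by
  classical
  set rt : Fin n → Bool → ℝ := fun i b => if i ∈ T then (if b then 0 else 1) else r i b with hrt
  have h1 : ∀ σ ∈ Finset.univ.filter (fun σ : Fin n → Bool => ∀ i ∈ T, σ i = false),
      ∏ i ∈ Tᶜ, r i (σ i) = ∏ i, rt i (σ i) := by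
    intro σ hσ
    rw [Finset.mem_filter] at hσ
    rw [← Finset.prod_mul_prod_compl T (fun i => rt i (σ i))]
    have hT : ∏ i ∈ T, rt i (σ i) = 1 := by
      apply Finset.prod_eq_one
      intro i hi
      simp [hrt, hi, hσ.2 i hi]
    rw [hT, one_mul]
    apply Finset.prod_congr rfl
    intro i hi
    simp [hrt, (Finset.mem_compl.mp hi)]
  rw [Finset.sum_congr rfl h1]
  rw [Finset.sum_filter]
  have h2 : ∀ σ : Fin n → Bool, (if (∀ i ∈ T, σ i = false) then ∏ i, rt i (σ i) else 0)
      = ∏ i, rt i (σ i) := by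
    intro σ
    by_cases h : ∀ i ∈ T, σ i = false
    · rw [if_pos h]
    · push_neg at h
      obtain ⟨i, hiT, hi⟩ := h
      rw [if_neg, Finset.prod_eq_zero (Finset.mem_univ i)]
      · simp [hrt, hiT, hi]
      · push_neg; exact ⟨i, hiT, hi⟩
  rw [Finset.sum_congr rfl (fun σ _ => h2 σ)]
  have h3 : ∑ σ : Fin n → Bool, ∏ i, rt i (σ i) = ∏ i, (∑ b : Bool, rt i b) := by
    rw [Finset.prod_univ_sum]
    rw [Fintype.piFinset_univ]
  rw [h3, ← Finset.prod_mul_prod_compl T (fun i => ∑ b : Bool, rt i b)]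
  have h4 : ∏ i ∈ T, (∑ b : Bool, rt i b) = 1 := by
    apply Finset.prod_eq_one; intro i hi; simp [hrt, hi]
  have h5 : ∏ i ∈ Tᶜ, (∑ b : Bool, rt i b) = (1-2*α)^(Tᶜ.card) := by
    rw [Finset.prod_congr rfl (fun i hi => ?_), Finset.prod_const]
    have := hr1 i
    simp [hrt, Finset.mem_compl.mp hi]
    linarith [hr1 i]
  rw [h4, one_mul, h5]

lemma stepB {n : ℕ} {α : ℝ} (hα2 : 2*α ≤ 1) (a : Fin n → ℝ) (ha : ∀ i, a i ≠ 0)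
    (r : Fin n → Bool → ℝ) (hr0 : ∀ i b, 0 ≤ r i b)
    (hr1 : ∀ i, r i false + r i true = 1 - 2*α) (x : ℝ) (T : Finset (Fin n)) :
    ∑ ε ∈ Finset.univ.filter (fun ε : Fin n → Bool =>
        ∑ i, a i * (if ε i then (1:ℝ) else 0) = x),
      ∏ i ∈ Tᶜ, r i (ε i)
    ≤ (T.card.choose (T.card/2)) * (1-2*α)^(Tᶜ.card) := by
  classical
  set S := Finset.univ.filter (fun ε : Fin n → Bool =>
      ∑ i, a i * (if ε i then (1:ℝ) else 0) = x) with hS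
  set g : (Fin n → Bool) → (Fin n → Bool) := fun ε i => if i ∈ T then false else ε i with hg
  set B := Finset.univ.filter (fun σ : Fin n → Bool => ∀ i ∈ T, σ i = false) with hB
  have hmaps : ∀ ε ∈ S, g ε ∈ B := by
    intro ε _
    simp only [hB, Finset.mem_filter, Finset.mem_univ, true_and]
    intro i hi; simp [hg, hi]
  rw [← Finset.sum_fiberwise_of_maps_to hmaps (fun ε => ∏ i ∈ Tᶜ, r i (ε i))]
  have key : ∀ σ ∈ B, ∑ ε ∈ S.filter (fun ε => g ε = σ), ∏ i ∈ Tᶜ, r i (ε i)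
      ≤ (T.card.choose (T.card/2)) * ∏ i ∈ Tᶜ, r i (σ i) := by
    intro σ hσ
    have hcongr : ∀ ε ∈ S.filter (fun ε => g ε = σ), ∏ i ∈ Tᶜ, r i (ε i) = ∏ i ∈ Tᶜ, r i (σ i) := by
      intro ε hε
      rw [Finset.mem_filter] at hε
      apply Finset.prod_congr rfl
      intro i hi
      have hiT := Finset.mem_compl.mp hi
      have : σ i = ε i := by rw [← hε.2]; simp [hg, hiT]
      rw [this]
    rw [Finset.sum_congr rfl hcongr, Finset.sum_const, nsmul_eq_mul]
    apply mul_le_mul_of_nonneg_right _ (Finset.prod_nonneg (fun i _ => hr0 i _))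
    -- card bound
    have hsub : S.filter (fun ε => g ε = σ) ⊆ Finset.univ.filter (fun ε : Fin n → Bool =>
        (∀ i ∉ T, ε i = σ i) ∧ ∑ i ∈ T, a i * (if ε i then (1:ℝ) else 0)
          = x - ∑ i ∈ Tᶜ, a i * (if σ i then (1:ℝ) else 0)) := by
      intro ε hε
      simp only [hS, Finset.mem_filter, Finset.mem_univ, true_and] at hε ⊢
      have hoff : ∀ i ∉ T, ε i = σ i := by
        intro i hi; rw [← hε.2]; simp [hg, hi]
      refine ⟨hoff, ?_⟩
      have hsplit : ∑ i ∈ T, a i * (if ε i then (1:ℝ) else 0)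
          + ∑ i ∈ Tᶜ, a i * (if ε i then (1:ℝ) else 0)
          = ∑ i, a i * (if ε i then (1:ℝ) else 0) := Finset.sum_add_sum_compl T _
      have hc : ∑ i ∈ Tᶜ, a i * (if ε i then (1:ℝ) else 0)
          = ∑ i ∈ Tᶜ, a i * (if σ i then (1:ℝ) else 0) := by
        apply Finset.sum_congr rfl
        intro i hi
        rw [hoff i (Finset.mem_compl.mp hi)]
      rw [hc] at hsplit
      rw [← hε.1]
      linarith
    calc ((S.filter (fun ε => g ε = σ)).card : ℝ)
        ≤ ((Finset.univ.filter (fun ε : Fin n → Bool =>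
            (∀ i ∉ T, ε i = σ i) ∧ ∑ i ∈ T, a i * (if ε i then (1:ℝ) else 0)
              = x - ∑ i ∈ Tᶜ, a i * (if σ i then (1:ℝ) else 0))).card : ℝ) := by
          exact_mod_cast Finset.card_le_card hsub
      _ ≤ (T.card.choose (T.card/2) : ℝ) := by exact_mod_cast count_LO a ha T σ _
  calc ∑ σ ∈ B, ∑ ε ∈ S.filter (fun ε => g ε = σ), ∏ i ∈ Tᶜ, r i (ε i)
      ≤ ∑ σ ∈ B, (T.card.choose (T.card/2)) * ∏ i ∈ Tᶜ, r i (σ i) :=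
        Finset.sum_le_sum key
    _ = (T.card.choose (T.card/2)) * ∑ σ ∈ B, ∏ i ∈ Tᶜ, r i (σ i) := by
        rw [Finset.mul_sum]
    _ = (T.card.choose (T.card/2)) * (1-2*α)^(Tᶜ.card) := by
        rw [sumB T r hr1]

lemma stepE (n : ℕ) (hn : 0 < n) (q : ℝ) (hq0 : 0 < q) (hq1 : q ≤ 1) :
    ∑ m ∈ Finset.range (n+1), (n.choose m : ℝ) * q^m * (1-q)^(n-m) * (1/Real.sqrt (m+1))
    ≤ Real.sqrt (1/q) / Real.sqrt n := by
  set W : ℕ → ℝ := fun m => (n.choose m : ℝ) * q^m * (1-q)^(n-m) with hW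
  have hq1' : 0 ≤ 1 - q := by linarith
  have hW0 : ∀ m, 0 ≤ W m := by intro m; positivity
  have hsum1 : ∑ m ∈ Finset.range (n+1), W m = 1 := by
    have := add_pow q (1-q) n
    simp only [add_sub_cancel, one_pow] at this
    calc ∑ m ∈ Finset.range (n+1), W m
        = ∑ m ∈ Finset.range (n+1), q^m * (1-q)^(n-m) * (n.choose m : ℝ) := by
          apply Finset.sum_congr rfl; intros; simp [hW]; ring
      _ = 1 := this.symm
  -- claim 2
  set f : ℕ → ℝ := fun j => ((n+1).choose j : ℝ) * q^j * (1-q)^(n+1-j) with hf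
  have hf0 : ∀ j, 0 ≤ f j := by intro j; positivity
  have hfsum : ∑ j ∈ Finset.range (n+2), f j = 1 := by
    have := add_pow q (1-q) (n+1)
    simp only [add_sub_cancel, one_pow] at this
    calc ∑ j ∈ Finset.range (n+2), f j
        = ∑ j ∈ Finset.range (n+2), q^j * (1-q)^(n+1-j) * ((n+1).choose j : ℝ) := by
          apply Finset.sum_congr rfl; intros; simp [hf]; ring
      _ = 1 := this.symm
  have key : q*((n:ℝ)+1) * ∑ m ∈ Finset.range (n+1), W m * (1/((m:ℝ)+1)) ≤ 1 := by
    rw [Finset.mul_sum]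
    have hterm : ∀ m ∈ Finset.range (n+1), q*((n:ℝ)+1) * (W m * (1/((m:ℝ)+1))) = f (m+1) := by
      intro m hm
      have hch : ((n:ℝ)+1) * (n.choose m : ℝ) = ((n+1).choose (m+1) : ℝ) * ((m:ℝ)+1) := by
        exact_mod_cast Nat.add_one_mul_choose_eq n m
      have hm1 : ((m:ℝ)+1) ≠ 0 := by positivity
      calc q*((n:ℝ)+1) * (W m * (1/((m:ℝ)+1)))
          = (((n:ℝ)+1) * (n.choose m : ℝ)) * (1/((m:ℝ)+1)) * (q^(m+1) * (1-q)^(n-m)) := by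
            rw [hW]; ring
        _ = (((n+1).choose (m+1) : ℝ) * ((m:ℝ)+1)) * (1/((m:ℝ)+1)) * (q^(m+1) * (1-q)^(n-m)) := by
            rw [hch]
        _ = ((n+1).choose (m+1) : ℝ) * q^(m+1) * (1-q)^(n-m) := by field_simp
        _ = f (m+1) := by simp only [hf]; rw [show n+1-(m+1) = n-m from by omega]
    rw [Finset.sum_congr rfl hterm]
    have : ∑ m ∈ Finset.range (n+1), f (m+1) ≤ ∑ j ∈ Finset.range (n+2), f j := by
      rw [Finset.sum_range_succ' f (n+1)]
      have := hf0 0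
      linarith [hf0 0]
    linarith [this, hfsum]
  have hsum2 : ∑ m ∈ Finset.range (n+1), W m * (1/((m:ℝ)+1)) ≤ 1/(q*((n:ℝ)+1)) := by
    rw [le_div_iff₀ (by positivity)]
    linarith [key]
  -- Cauchy-Schwarz
  set Z := ∑ m ∈ Finset.range (n+1), W m * (1/Real.sqrt ((m:ℝ)+1)) with hZ
  have hZ0 : 0 ≤ Z := Finset.sum_nonneg (fun m _ => by positivity)
  have hCS : Z^2 ≤ (∑ m ∈ Finset.range (n+1), W m) *
      (∑ m ∈ Finset.range (n+1), W m * (1/((m:ℝ)+1))) := by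
    have h := Finset.sum_mul_sq_le_sq_mul_sq (Finset.range (n+1))
      (fun m => Real.sqrt (W m)) (fun m => Real.sqrt (W m) * (1/Real.sqrt ((m:ℝ)+1)))
    have e1 : ∀ m ∈ Finset.range (n+1),
        Real.sqrt (W m) * (Real.sqrt (W m) * (1/Real.sqrt ((m:ℝ)+1)))
        = W m * (1/Real.sqrt ((m:ℝ)+1)) := by
      intro m _; rw [← mul_assoc, Real.mul_self_sqrt (hW0 m)]
    have e2 : ∀ m ∈ Finset.range (n+1), Real.sqrt (W m)^2 = W m := by
      intro m _; exact Real.sq_sqrt (hW0 m)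
    have e3 : ∀ m ∈ Finset.range (n+1),
        (Real.sqrt (W m) * (1/Real.sqrt ((m:ℝ)+1)))^2 = W m * (1/((m:ℝ)+1)) := by
      intro m _
      rw [mul_pow, Real.sq_sqrt (hW0 m), one_div, inv_pow, Real.sq_sqrt (by positivity), one_div]
    rw [Finset.sum_congr rfl e1, Finset.sum_congr rfl e2, Finset.sum_congr rfl e3] at h
    exact h
  rw [hsum1, one_mul] at hCS
  have hZ2 : Z^2 ≤ 1/(q*(n:ℝ)) := by
    have h1 : 1/(q*((n:ℝ)+1)) ≤ 1/(q*(n:ℝ)) := by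
      apply one_div_le_one_div_of_le
      · positivity
      · nlinarith
    linarith [hCS.trans hsum2]
  have hfinal : Z ≤ Real.sqrt (1/(q*(n:ℝ))) := by
    rw [Real.le_sqrt hZ0 (by positivity)]
    exact hZ2
  have heq : Real.sqrt (1/(q*(n:ℝ))) = Real.sqrt (1/q) / Real.sqrt n := by
    rw [show 1/(q*(n:ℝ)) = (1/q)/(n:ℝ) by ring, Real.sqrt_div (by positivity)]
  calc ∑ m ∈ Finset.range (n+1), (n.choose m : ℝ) * q^m * (1-q)^(n-m) * (1/Real.sqrt (m+1))
      = Z := by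
        refine Finset.sum_congr rfl fun m _ => ?_
        push_cast
        ring
    _ ≤ Real.sqrt (1/(q*(n:ℝ))) := hfinal
    _ = Real.sqrt (1/q) / Real.sqrt n := heq

lemma comb_bound {n : ℕ} (hn : 0 < n) {α : ℝ} (hα : 0 < α) (hα' : α ≤ 1/2)
    (a : Fin n → ℝ) (ha : ∀ i, a i ≠ 0) (w : Fin n → Bool → ℝ)
    (hw1 : ∀ i b, α ≤ w i b) (hw2 : ∀ i, w i false + w i true = 1) (x : ℝ) :
    ∑ ε ∈ Finset.univ.filter (fun ε : Fin n → Bool =>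
        ∑ i, a i * (if ε i then (1:ℝ) else 0) = x), ∏ i, w i (ε i)
    ≤ Real.sqrt (1/(2*α)) / Real.sqrt n := by
  classical
  have hα2 : 2*α ≤ 1 := by linarith
  set r : Fin n → Bool → ℝ := fun i b => w i b - α with hr
  have hr0 : ∀ i b, 0 ≤ r i b := fun i b => by simp [hr]; linarith [hw1 i b]
  have hr1 : ∀ i, r i false + r i true = 1 - 2*α := fun i => by
    simp [hr]; linarith [hw2 i]
  set S := Finset.univ.filter (fun ε : Fin n → Bool =>
      ∑ i, a i * (if ε i then (1:ℝ) else 0) = x) with hS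
  have hA : ∀ ε : Fin n → Bool, ∏ i, w i (ε i)
      = ∑ T ∈ (Finset.univ : Finset (Fin n)).powerset, α^T.card * ∏ i ∈ Tᶜ, r i (ε i) := by
    intro ε
    have h1 : ∀ i ∈ Finset.univ, w i (ε i) = α + r i (ε i) := fun i _ => by simp [hr]
    rw [Finset.prod_congr rfl h1, Finset.prod_add]
    refine Finset.sum_congr rfl fun T _ => ?_
    rw [Finset.prod_const, Finset.compl_eq_univ_sdiff]
  calc ∑ ε ∈ S, ∏ i, w i (ε i)
      = ∑ ε ∈ S, ∑ T ∈ (Finset.univ : Finset (Fin n)).powerset,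
          α^T.card * ∏ i ∈ Tᶜ, r i (ε i) := Finset.sum_congr rfl (fun ε _ => hA ε)
    _ = ∑ T ∈ (Finset.univ : Finset (Fin n)).powerset,
          α^T.card * ∑ ε ∈ S, ∏ i ∈ Tᶜ, r i (ε i) := by
        rw [Finset.sum_comm]
        exact Finset.sum_congr rfl fun T _ => by rw [Finset.mul_sum]
    _ ≤ ∑ T ∈ (Finset.univ : Finset (Fin n)).powerset,
          α^T.card * ((T.card.choose (T.card/2)) * (1-2*α)^(Tᶜ.card)) := by
        refine Finset.sum_le_sum fun T _ => ?_
        exact mul_le_mul_of_nonneg_left (stepB hα2 a ha r hr0 hr1 x T) (by positivity)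
    _ = ∑ m ∈ Finset.range (n+1), (n.choose m : ℝ) *
          (α^m * ((m.choose (m/2)) * (1-2*α)^(n-m))) := by
        rw [Finset.sum_powerset]
        · simp only [Finset.card_univ, Fintype.card_fin]
          refine Finset.sum_congr rfl fun m hm => ?_
          rw [Finset.sum_congr rfl (fun T hT => ?_), Finset.sum_const, nsmul_eq_mul,
            Finset.card_powersetCard, Finset.card_univ, Fintype.card_fin]
          rw [Finset.mem_powersetCard] at hT
          rw [hT.2, Finset.card_compl, hT.2, Fintype.card_fin]
    _ ≤ ∑ m ∈ Finset.range (n+1), (n.choose m : ℝ) * (2*α)^m * (1-2*α)^(n-m)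
          * (1/Real.sqrt (m+1)) := by
        refine Finset.sum_le_sum fun m _ => ?_
        have hch := choose_half_le m
        have hs : (0:ℝ) < Real.sqrt (m+1) := Real.sqrt_pos.mpr (by positivity)
        have h2 : (m.choose (m/2) : ℝ) ≤ 2^m / Real.sqrt (m+1) := by
          rw [le_div_iff₀ hs]; exact hch
        calc (n.choose m : ℝ) * (α^m * ((m.choose (m/2)) * (1-2*α)^(n-m)))
            ≤ (n.choose m : ℝ) * (α^m * ((2^m / Real.sqrt (m+1)) * (1-2*α)^(n-m))) := by
              have h0 : (0:ℝ) ≤ 1-2*α := by linarith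
              have := mul_le_mul_of_nonneg_right h2 (pow_nonneg h0 (n-m))
              have := mul_le_mul_of_nonneg_left this (pow_nonneg hα.le m)
              exact mul_le_mul_of_nonneg_left this (Nat.cast_nonneg _)
          _ = (n.choose m : ℝ) * (2*α)^m * (1-2*α)^(n-m) * (1/Real.sqrt (m+1)) := by
              rw [mul_pow]; field_simp
    _ ≤ Real.sqrt (1/(2*α)) / Real.sqrt n := stepE n hn (2*α) (by linarith) hα2

theorem stmt8 (α : ℝ) (hα : 0 < α) (hα' : α ≤ 1 / 2) :
    ∃ c : ℝ, ∀ (n : ℕ), 0 < n → ∀ (a : Fin n → ℝ) (p : Fin n → ℝ)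
      (Ω : Type) (mΩ : MeasurableSpace Ω) (μ : Measure Ω), IsProbabilityMeasure μ →
      ∀ (X : Fin n → Ω → ℝ),
        (∀ i, a i ≠ 0) →
        (∀ i, α ≤ p i ∧ p i ≤ 1 - α) →
        (∀ i, Measurable (X i)) →
        iIndepFun X μ →
        (∀ i, μ {ω | X i ω = 1} = ENNReal.ofReal (p i) ∧
              μ {ω | X i ω = 0} = ENNReal.ofReal (1 - p i)) →
        ∀ x : ℝ, (μ {ω | (∑ i, a i * X i ω) = x}).toReal ≤
          c * (n : ℝ) ^ (-(1 : ℝ) / 2) := by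
  classical
  refine ⟨Real.sqrt (1/(2*α)), ?_⟩
  intro n hn a p Ω mΩ μ hμ X ha hp hXm hIndep hX x
  set w : Fin n → Bool → ℝ := fun i b => if b then p i else 1 - p i with hw
  have hw1 : ∀ i b, α ≤ w i b := by
    intro i b; cases b <;> simp [hw] <;> [linarith [(hp i).2]; exact (hp i).1]
  have hw2 : ∀ i, w i false + w i true = 1 := by intro i; simp [hw]
  have hw0 : ∀ i b, 0 ≤ w i b := fun i b => le_trans hα.le (hw1 i b)
  -- the cube-point sets
  set bb : Bool → ℝ := fun b => if b then (1:ℝ) else 0 with hbb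
  set D : (Fin n → Bool) → Set Ω := fun ε => ⋂ i, X i ⁻¹' {bb (ε i)} with hD
  have hDmeas : ∀ ε, μ (D ε) = ENNReal.ofReal (∏ i, w i (ε i)) := by
    intro ε
    have h1 : μ (D ε) = ∏ i, μ (X i ⁻¹' {bb (ε i)}) := by
      refine hIndep.meas_iInter fun i => ⟨{bb (ε i)}, measurableSet_singleton _, rfl⟩
    have h2 : ∀ i, μ (X i ⁻¹' {bb (ε i)}) = ENNReal.ofReal (w i (ε i)) := by
      intro i
      cases hεi : ε i
      · have := (hX i).2
        simpa [hbb, hw, Set.preimage, Set.mem_singleton_iff] using this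
      · have := (hX i).1
        simpa [hbb, hw, Set.preimage, Set.mem_singleton_iff] using this
    rw [h1, Finset.prod_congr rfl (fun i _ => h2 i)]
    rw [← ENNReal.ofReal_prod_of_nonneg (fun i _ => hw0 i _)]
  -- null set
  set N : Set Ω := ⋃ i, (X i ⁻¹' {0, 1})ᶜ with hN
  have hNnull : μ N = 0 := by
    rw [hN]
    refine measure_iUnion_null fun i => ?_
    have hm : MeasurableSet (X i ⁻¹' ({0, 1} : Set ℝ)) :=
      (hXm i) (by measurability)
    have hfull : μ (X i ⁻¹' ({0, 1} : Set ℝ)) = 1 := by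
      have hdisj : Disjoint (X i ⁻¹' ({0} : Set ℝ)) (X i ⁻¹' ({1} : Set ℝ)) := by
        refine Set.disjoint_left.mpr fun ω h0 h1 => ?_
        simp only [Set.mem_preimage, Set.mem_singleton_iff] at h0 h1
        rw [h0] at h1; norm_num at h1
      have hsplit : X i ⁻¹' ({0, 1} : Set ℝ) = X i ⁻¹' {0} ∪ X i ⁻¹' {1} := by
        rw [← Set.preimage_union]; congr 1
      rw [hsplit, measure_union hdisj ((hXm i) (measurableSet_singleton _))]
      have h0 : μ (X i ⁻¹' {0}) = ENNReal.ofReal (1 - p i) := by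
        have := (hX i).2; simpa [Set.preimage, Set.mem_singleton_iff] using this
      have h1 : μ (X i ⁻¹' {1}) = ENNReal.ofReal (p i) := by
        have := (hX i).1; simpa [Set.preimage, Set.mem_singleton_iff] using this
      rw [h0, h1, ← ENNReal.ofReal_add (by linarith [(hp i).2, hα]) (by linarith [(hp i).1, hα])]
      norm_num
    have := measure_compl hm (measure_ne_top μ _)
    rw [hfull, measure_univ] at this
    simpa using this
  -- covering
  set Sx := Finset.univ.filter (fun ε : Fin n → Bool =>
      ∑ i, a i * bb (ε i) = x) with hSx
  have hcover : {ω | (∑ i, a i * X i ω) = x} ⊆ N ∪ ⋃ ε ∈ Sx, D ε := by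
    intro ω hω
    simp only [Set.mem_setOf_eq] at hω
    by_cases hωN : ω ∈ N
    · exact Set.mem_union_left _ hωN
    · refine Set.mem_union_right _ ?_
      have hval : ∀ i, X i ω = 0 ∨ X i ω = 1 := by
        intro i
        simp only [hN, Set.mem_iUnion, Set.mem_compl_iff, not_exists, not_not] at hωN
        have := hωN i
        simpa [Set.mem_preimage] using this
      set ε : Fin n → Bool := fun i => decide (X i ω = 1) with hε
      have hXε : ∀ i, X i ω = bb (ε i) := by
        intro i
        rcases hval i with h | h
        · have : ε i = false := by simp [hε, h]
          rw [this]; simpa [hbb] using h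
        · have : ε i = true := by simp [hε, h]
          rw [this]; simpa [hbb] using h
      have hεS : ε ∈ Sx := by
        simp only [hSx, Finset.mem_filter, Finset.mem_univ, true_and]
        rw [← hω]
        exact Finset.sum_congr rfl fun i _ => by rw [hXε i]
      exact Set.mem_biUnion hεS (Set.mem_iInter.mpr fun i => by
        simp only [Set.mem_preimage, Set.mem_singleton_iff]; exact hXε i)
  -- put together
  have hbound : μ {ω | (∑ i, a i * X i ω) = x}
      ≤ ENNReal.ofReal (∑ ε ∈ Sx, ∏ i, w i (ε i)) := by
    calc μ {ω | (∑ i, a i * X i ω) = x} ≤ μ (N ∪ ⋃ ε ∈ Sx, D ε) := measure_mono hcover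
      _ ≤ μ N + μ (⋃ ε ∈ Sx, D ε) := measure_union_le _ _
      _ = μ (⋃ ε ∈ Sx, D ε) := by rw [hNnull, zero_add]
      _ ≤ ∑ ε ∈ Sx, μ (D ε) := measure_biUnion_finset_le _ _
      _ = ∑ ε ∈ Sx, ENNReal.ofReal (∏ i, w i (ε i)) :=
          Finset.sum_congr rfl fun ε _ => hDmeas ε
      _ = ENNReal.ofReal (∑ ε ∈ Sx, ∏ i, w i (ε i)) := by
          rw [ENNReal.ofReal_sum_of_nonneg fun ε _ => Finset.prod_nonneg fun i _ => hw0 i _]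
  have hcomb := comb_bound hn hα hα' a ha w hw1 hw2 x
  have hreal : (μ {ω | (∑ i, a i * X i ω) = x}).toReal
      ≤ ∑ ε ∈ Sx, ∏ i, w i (ε i) :=
    ENNReal.toReal_le_of_le_ofReal
      (Finset.sum_nonneg fun ε _ => Finset.prod_nonneg fun i _ => hw0 i _) hbound
  have hrpow : (n : ℝ) ^ (-(1:ℝ)/2) = (Real.sqrt n)⁻¹ := by
    rw [show -(1:ℝ)/2 = -(1/2) by norm_num, Real.rpow_neg (Nat.cast_nonneg n),
      ← Real.sqrt_eq_rpow]
  rw [hrpow]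
  calc (μ {ω | (∑ i, a i * X i ω) = x}).toReal
      ≤ ∑ ε ∈ Sx, ∏ i, w i (ε i) := hreal
    _ ≤ Real.sqrt (1/(2*α)) / Real.sqrt n := hcomb
    _ = Real.sqrt (1/(2*α)) * (Real.sqrt n)⁻¹ := div_eq_mul_inv _ _
end

section
/- For every δ > 0 there exists c(δ) such that the following holds. Let G = (V1, V2, E) be a bipartite graph, let x, y ∈ V1 with |N(x) △ N(y)| ≥ δ|V2|, and let W be a uniformly random subset of V2. Then P(|N(x) ∩ W| = |N(y) ∩ W|) ≤ c(δ)·|V2|^{−1/2}. -/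
open Finset

lemma centralBinom_sqrt (k : ℕ) :
    (Nat.centralBinom k : ℝ) * Real.sqrt (3 * k + 1) ≤ 4 ^ k := by
  induction k with
  | zero => simp [Nat.centralBinom]
  | succ k ih =>
    have hrec : ((k : ℝ) + 1) * Nat.centralBinom (k + 1)
        = 2 * (2 * k + 1) * Nat.centralBinom k := by
      have := Nat.succ_mul_centralBinom_succ k
      exact_mod_cast congrArg (fun x : ℕ => (x : ℝ)) this
    -- key: 2*(2k+1)*√(3k+4) ≤ 4*(k+1)*√(3k+1)
    have key : 2 * (2 * (k : ℝ) + 1) * Real.sqrt (3 * (k + 1) + 1)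
        ≤ 4 * ((k : ℝ) + 1) * Real.sqrt (3 * k + 1) := by
      have h1 : (0:ℝ) ≤ 2 * (2 * (k : ℝ) + 1) := by positivity
      have h2 : (0:ℝ) ≤ 4 * ((k : ℝ) + 1) := by positivity
      have hx : (0:ℝ) ≤ 3 * ((k:ℝ) + 1) + 1 := by positivity
      have hy : (0:ℝ) ≤ 3 * (k:ℝ) + 1 := by positivity
      rw [← Real.sqrt_sq h1, ← Real.sqrt_sq h2, ← Real.sqrt_mul (by positivity),
        ← Real.sqrt_mul (by positivity)]
      apply Real.sqrt_le_sqrt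
      nlinarith [sq_nonneg ((k:ℝ))]
    have hpos : (0:ℝ) < (k : ℝ) + 1 := by positivity
    have hC : (0:ℝ) ≤ (Nat.centralBinom k : ℝ) := by positivity
    have hs : (0:ℝ) ≤ Real.sqrt (3 * ((k:ℝ)+1) + 1) := Real.sqrt_nonneg _
    -- multiply target by (k+1)
    rw [← mul_le_mul_iff_right₀ hpos]
    calc ((k:ℝ)+1) * ((Nat.centralBinom (k+1) : ℝ) * Real.sqrt (3 * ((k:ℕ)+1 : ℕ) + 1))
        = (2 * (2 * k + 1) * Nat.centralBinom k) * Real.sqrt (3 * ((k:ℝ)+1) + 1) := by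
          push_cast at hrec ⊢
          rw [← mul_assoc, hrec]
      _ = (Nat.centralBinom k : ℝ) * (2 * (2 * (k:ℝ) + 1) * Real.sqrt (3 * ((k:ℝ)+1) + 1)) := by
          ring
      _ ≤ (Nat.centralBinom k : ℝ) * (4 * ((k:ℝ)+1) * Real.sqrt (3 * (k:ℝ) + 1)) := by
          apply mul_le_mul_of_nonneg_left _ hC
          convert key using 3
      _ = 4 * ((k:ℝ)+1) * ((Nat.centralBinom k : ℝ) * Real.sqrt (3 * k + 1)) := by ring
      _ ≤ 4 * ((k:ℝ)+1) * 4 ^ k := by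
          apply mul_le_mul_of_nonneg_left ih (by positivity)
      _ = ((k:ℝ)+1) * 4 ^ (k+1) := by ring

lemma choose_middle_sqrt (m : ℕ) :
    (m.choose (m / 2) : ℝ) * Real.sqrt m ≤ 2 ^ m := by
  rcases Nat.even_or_odd m with ⟨k, hk⟩ | ⟨k, hk⟩
  · subst hk
    have h1 : (k + k) / 2 = k := by omega
    have h2 : (k + k).choose k = Nat.centralBinom k := by
      rw [Nat.centralBinom_eq_two_mul_choose]; congr 1; omega
    rw [h1, h2]
    calc (Nat.centralBinom k : ℝ) * Real.sqrt (k + k : ℕ)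
        ≤ (Nat.centralBinom k : ℝ) * Real.sqrt (3 * k + 1) := by
          apply mul_le_mul_of_nonneg_left _ (by positivity)
          apply Real.sqrt_le_sqrt; push_cast; linarith
      _ ≤ 4 ^ k := centralBinom_sqrt k
      _ = 2 ^ (k + k) := by rw [show (4:ℝ) = 2^2 by norm_num, ← pow_mul, two_mul]
  · subst hk
    have h1 : (2 * k + 1) / 2 = k := by omega
    have h2 : 2 * (2 * k + 1).choose k = Nat.centralBinom (k + 1) := by
      rw [Nat.centralBinom_eq_two_mul_choose]
      have e1 : 2 * (k + 1) = (2 * k + 1) + 1 := by ring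
      rw [e1, Nat.choose_succ_succ' (2*k+1) k]
      have e2 : (2 * k + 1).choose (k + 1) = (2 * k + 1).choose k := by
        rw [show k + 1 = (2 * k + 1) - k by omega, Nat.choose_symm (by omega)]
      omega
    rw [h1]
    have h2' : ((2 * k + 1).choose k : ℝ) = (Nat.centralBinom (k + 1) : ℝ) / 2 := by
      field_simp; exact_mod_cast (by omega : (2 * k + 1).choose k * 2 = Nat.centralBinom (k+1))
    rw [h2']
    calc (Nat.centralBinom (k+1) : ℝ) / 2 * Real.sqrt (2 * k + 1 : ℕ)
        ≤ (Nat.centralBinom (k+1) : ℝ) / 2 * Real.sqrt (3 * (k+1) + 1) := by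
          apply mul_le_mul_of_nonneg_left _ (by positivity)
          apply Real.sqrt_le_sqrt; push_cast; linarith
      _ ≤ (4 : ℝ) ^ (k+1) / 2 := by
          rw [div_mul_eq_mul_div, div_le_div_iff_of_pos_right (by norm_num)]
          have := centralBinom_sqrt (k+1); push_cast at this ⊢; linarith
      _ ≤ 2 ^ (2 * k + 1) := by
          rw [show (4:ℝ) = 2^2 by norm_num, ← pow_mul]
          rw [show 2 * (k+1) = (2*k+1) + 1 by ring, pow_succ]
          norm_num

lemma count_lemma {V2 : Type} [Fintype V2] [DecidableEq V2] (A B : Finset V2)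
    (hd : Disjoint A B) :
    ((Finset.univ : Finset (Finset V2)).filter
        (fun W => (A ∩ W).card = (B ∩ W).card)).card ≤
      ((A ∪ B).card.choose A.card) * 2 ^ (Fintype.card V2 - (A ∪ B).card) := by
  classical
  set S := A ∪ B with hS
  set t := S.powerset.filter (fun T => (A ∩ T).card = (B ∩ T).card) with ht
  have hAS : A ⊆ S := subset_union_left
  have hBS : B ⊆ S := subset_union_right
  have hmap : ∀ W ∈ (Finset.univ : Finset (Finset V2)).filter
      (fun W => (A ∩ W).card = (B ∩ W).card), W ∩ S ∈ t := by
    intro W hW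
    simp only [mem_filter, mem_univ, true_and] at hW
    simp only [ht, mem_filter, mem_powerset]
    refine ⟨inter_subset_right, ?_⟩
    have e1 : A ∩ (W ∩ S) = A ∩ W := by
      ext v; simp only [mem_inter, hS, mem_union]; tauto
    have e2 : B ∩ (W ∩ S) = B ∩ W := by
      ext v; simp only [mem_inter, hS, mem_union]; tauto
    rw [e1, e2]; exact hW
  rw [Finset.card_eq_sum_card_fiberwise hmap]
  have hfiber : ∀ T ∈ t,
      (((Finset.univ : Finset (Finset V2)).filter
        (fun W => (A ∩ W).card = (B ∩ W).card)).filter (fun W => W ∩ S = T)).card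
      ≤ 2 ^ (Fintype.card V2 - S.card) := by
    intro T hT
    have : (((Finset.univ : Finset (Finset V2)).filter
        (fun W => (A ∩ W).card = (B ∩ W).card)).filter (fun W => W ∩ S = T)).card
        ≤ (Sᶜ.powerset).card := by
      apply Finset.card_le_card_of_injOn (fun W => W \ S)
      · intro W hW
        simp only [mem_coe, mem_powerset]
        intro v hv
        simp only [mem_sdiff] at hv
        simp only [mem_compl]
        exact hv.2
      · intro W1 h1 W2 h2 he
        simp only [coe_filter, Set.mem_setOf_eq, mem_filter] at h1 h2
        simp only [] at he
        have key : W1 \ S ∪ W1 ∩ S = W2 \ S ∪ W2 ∩ S := by rw [h1.2, h2.2, he]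
        rwa [Finset.sdiff_union_inter, Finset.sdiff_union_inter] at key
    rwa [Finset.card_powerset, Finset.card_compl] at this
  calc ∑ T ∈ t, (((Finset.univ : Finset (Finset V2)).filter
        (fun W => (A ∩ W).card = (B ∩ W).card)).filter (fun W => W ∩ S = T)).card
      ≤ ∑ T ∈ t, 2 ^ (Fintype.card V2 - S.card) := Finset.sum_le_sum hfiber
    _ = t.card * 2 ^ (Fintype.card V2 - S.card) := by rw [Finset.sum_const, smul_eq_mul]
    _ ≤ (S.card.choose A.card) * 2 ^ (Fintype.card V2 - S.card) := by
        apply Nat.mul_le_mul_right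
        have : t.card ≤ (S.powersetCard A.card).card := by
          apply Finset.card_le_card_of_injOn (fun T => (A \ T) ∪ (B ∩ T))
          · intro T hT
            simp only [ht, coe_filter, Set.mem_setOf_eq, mem_coe, mem_filter, mem_powerset] at hT
            obtain ⟨hTS, hcard⟩ := hT
            simp only [mem_coe, mem_powersetCard]
            constructor
            · intro v hv
              simp only [mem_union, mem_sdiff, mem_inter] at hv
              rcases hv with h | h
              · exact hAS h.1
              · exact hBS h.1
            · have hdis : Disjoint (A \ T) (B ∩ T) :=
                hd.mono sdiff_subset inter_subset_left
              rw [Finset.card_union_of_disjoint hdis]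
              have h1 := Finset.card_inter_add_card_sdiff A T
              omega
          · intro T1 h1 T2 h2 he
            simp only [coe_filter, Set.mem_setOf_eq, mem_powerset, ht] at h1 h2
            ext v
            have hv := Finset.ext_iff.mp he v
            simp only [mem_union, mem_sdiff, mem_inter] at hv
            have hd' : v ∈ A → v ∉ B := fun h => Finset.disjoint_left.mp hd h
            have hs1 : v ∈ T1 → v ∈ A ∨ v ∈ B := by
              intro h; have := h1.1 h; simpa [hS, mem_union] using this
            have hs2 : v ∈ T2 → v ∈ A ∨ v ∈ B := by
              intro h; have := h2.1 h; simpa [hS, mem_union] using this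
            tauto
        rwa [Finset.card_powersetCard] at this

def nbr {V1 V2 : Type} [Fintype V2] (E : V1 → V2 → Prop) [∀ a b, Decidable (E a b)]
    (u : V1) : Finset V2 := Finset.univ.filter (fun v => E u v)

theorem stmt9 (δ : ℝ) (hδ : 0 < δ) :
    ∃ c : ℝ, ∀ (V1 V2 : Type) [Fintype V1] [Fintype V2] [DecidableEq V2] [Nonempty V2]
      (E : V1 → V2 → Prop) [∀ a b, Decidable (E a b)] (x y : V1),
      δ * Fintype.card V2 ≤ ((symmDiff (nbr E x) (nbr E y)).card : ℝ) →
      (((Finset.univ : Finset (Finset V2)).filter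
          (fun W => (nbr E x ∩ W).card = (nbr E y ∩ W).card)).card : ℝ) ≤
        c * (Fintype.card V2 : ℝ) ^ (-(1 : ℝ) / 2) * 2 ^ (Fintype.card V2) := by
  refine ⟨(Real.sqrt δ)⁻¹, ?_⟩
  intro V1 V2 _ _ _ _ E _ x y hδS
  classical
  set A := nbr E x \ nbr E y with hA
  set B := nbr E y \ nbr E x with hB
  have hd : Disjoint A B := disjoint_sdiff_sdiff
  have hsymm : symmDiff (nbr E x) (nbr E y) = A ∪ B := by
    rw [symmDiff_def, Finset.sup_eq_union]
  set n := Fintype.card V2 with hn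
  set m := (A ∪ B).card with hm
  -- condition equivalence
  have hcond : ∀ W : Finset V2,
      (nbr E x ∩ W).card = (nbr E y ∩ W).card ↔ (A ∩ W).card = (B ∩ W).card := by
    intro W
    have e1 : (nbr E x ∩ W).card
        = (A ∩ W).card + ((nbr E x ∩ nbr E y) ∩ W).card := by
      conv_lhs => rw [← Finset.sdiff_union_inter (nbr E x) (nbr E y)]
      rw [Finset.union_inter_distrib_right, Finset.card_union_of_disjoint]
      exact (Finset.disjoint_sdiff_inter _ _).mono inter_subset_left inter_subset_left
    have e2 : (nbr E y ∩ W).card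
        = (B ∩ W).card + ((nbr E x ∩ nbr E y) ∩ W).card := by
      conv_lhs => rw [← Finset.sdiff_union_inter (nbr E y) (nbr E x)]
      rw [Finset.union_inter_distrib_right, Finset.card_union_of_disjoint,
        Finset.inter_comm (nbr E y)]
      exact (Finset.disjoint_sdiff_inter _ _).mono inter_subset_left inter_subset_left
    omega
  have hfilt : (Finset.univ : Finset (Finset V2)).filter
        (fun W => (nbr E x ∩ W).card = (nbr E y ∩ W).card)
      = (Finset.univ : Finset (Finset V2)).filter
        (fun W => (A ∩ W).card = (B ∩ W).card) :=
    Finset.filter_congr (fun W _ => by simpa using hcond W)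
  have hcount : ((Finset.univ : Finset (Finset V2)).filter
        (fun W => (nbr E x ∩ W).card = (nbr E y ∩ W).card)).card
      ≤ m.choose (m / 2) * 2 ^ (n - m) := by
    rw [hfilt]
    calc ((Finset.univ : Finset (Finset V2)).filter
          (fun W => (A ∩ W).card = (B ∩ W).card)).card
        ≤ m.choose A.card * 2 ^ (n - m) := count_lemma A B hd
      _ ≤ m.choose (m / 2) * 2 ^ (n - m) :=
          Nat.mul_le_mul_right _ (Nat.choose_le_middle A.card m)
  -- numeric facts
  rw [hsymm] at hδS
  have hn1 : (1 : ℕ) ≤ n := Fintype.card_pos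
  have hnR : (0 : ℝ) < (n : ℝ) := by exact_mod_cast hn1
  have hmR : (0 : ℝ) < (m : ℝ) := lt_of_lt_of_le (by positivity) hδS
  have hm1 : 1 ≤ m := by exact_mod_cast Nat.one_le_iff_ne_zero.mpr (by
    intro h; rw [h] at hmR; simp at hmR)
  have hmn : m ≤ n := Finset.card_le_univ _
  have hsm : (0 : ℝ) < Real.sqrt m := Real.sqrt_pos.mpr hmR
  have hsδn : (0 : ℝ) < Real.sqrt (δ * n) := Real.sqrt_pos.mpr (by positivity)
  -- real chain
  calc (((Finset.univ : Finset (Finset V2)).filter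
          (fun W => (nbr E x ∩ W).card = (nbr E y ∩ W).card)).card : ℝ)
      ≤ (m.choose (m / 2) : ℝ) * 2 ^ (n - m) := by exact_mod_cast hcount
    _ ≤ (2 ^ m / Real.sqrt m) * 2 ^ (n - m) := by
        apply mul_le_mul_of_nonneg_right _ (by positivity)
        rw [div_eq_mul_inv, ← mul_le_mul_iff_left₀ hsm, mul_assoc,
          inv_mul_cancel₀ (ne_of_gt hsm), mul_one]
        exact choose_middle_sqrt m
    _ = 2 ^ n / Real.sqrt m := by
        rw [div_mul_eq_mul_div, ← pow_add]
        congr 2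
        omega
    _ ≤ 2 ^ n / Real.sqrt (δ * n) := by
        apply div_le_div_of_nonneg_left (by positivity) hsδn
        exact Real.sqrt_le_sqrt hδS
    _ = (Real.sqrt δ)⁻¹ * (n : ℝ) ^ (-(1 : ℝ) / 2) * 2 ^ n := by
        rw [Real.sqrt_mul hδ.le]
        have : ((n : ℝ)) ^ (-(1 : ℝ) / 2) = (Real.sqrt n)⁻¹ := by
          rw [neg_div, Real.rpow_neg hnR.le, Real.sqrt_eq_rpow]
        rw [this]
        field_simp
end

section
/- For every ε > 0 there exists δ > 0 such that the following holds. Let G = (V1, V2, E) be a bipartite graph with |V1| ≥ |V2|/2 and let P = {x₀, x₁, …, x_{|V2|^{0.5}}} be an ε-pair-star of size |V2|^{0.5} rooted at x₀ in V1. If W ⊆ V2 is chosen uniformly at random, then with probability at least 3/4 the set A = {d^W(x_i) − d^W(x₀) : i ∈ [|V2|^{0.5}]} ∩ [−3|V2|^{0.5}, 3|V2|^{0.5}] has size at least δ|V2|^{0.5}. -/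
open Finset

set_option linter.unusedSectionVars false
set_option maxHeartbeats 1000000


lemma centralBinom_sq_bound (t : ℕ) : (Nat.centralBinom t)^2 * (3*t+1) ≤ 16^t := by
  induction t with
  | zero => simp [Nat.centralBinom]
  | succ n ih =>
    have key := Nat.succ_mul_centralBinom_succ n
    have hpos : 0 < (n+1)^2 * (3*n+1) := by positivity
    have h1 : ((n+1)^2 * (3*n+1)) * ((Nat.centralBinom (n+1))^2 * (3*(n+1)+1))
        ≤ ((n+1)^2 * (3*n+1)) * 16^(n+1) := by
      have e1 : ((n+1)^2 * (3*n+1)) * ((Nat.centralBinom (n+1))^2 * (3*(n+1)+1))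
          = (((n+1) * Nat.centralBinom (n+1))^2) * ((3*n+1) * (3*n+4)) := by ring
      rw [e1, key]
      have e2 : (2 * (2 * n + 1) * Nat.centralBinom n)^2 * ((3*n+1) * (3*n+4))
          = ((Nat.centralBinom n)^2 * (3*n+1)) * (4 * (2*n+1)^2 * (3*n+4)) := by ring
      rw [e2]
      calc ((Nat.centralBinom n)^2 * (3*n+1)) * (4 * (2*n+1)^2 * (3*n+4))
          ≤ 16^n * (4 * (2*n+1)^2 * (3*n+4)) := Nat.mul_le_mul_right _ ih
        _ ≤ 16^n * (16 * ((n+1)^2 * (3*n+1))) := by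
            apply Nat.mul_le_mul_left
            nlinarith
        _ = ((n+1)^2 * (3*n+1)) * 16^(n+1) := by ring
    exact Nat.le_of_mul_le_mul_left h1 hpos

lemma choose_middle_sq_bound (m : ℕ) : (m.choose (m/2))^2 * (m+1) ≤ 4^m := by
  rcases Nat.even_or_odd m with ⟨t, ht⟩ | ⟨t, ht⟩
  · have ht' : m = 2*t := by omega
    subst ht'
    have h2 : (2*t)/2 = t := by omega
    rw [h2, ← Nat.centralBinom_eq_two_mul_choose]
    calc (Nat.centralBinom t)^2 * (2*t+1) ≤ (Nat.centralBinom t)^2 * (3*t+1) :=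
          Nat.mul_le_mul_left _ (by omega)
      _ ≤ 16^t := centralBinom_sq_bound t
      _ = 4^(2*t) := by rw [pow_mul]; norm_num
  · subst ht
    have h2 : (2*t+1)/2 = t := by omega
    rw [h2]
    match t with
    | 0 => simp
    | Nat.succ s =>
      set t := s + 1
    -- (2t+1).choose t = (2t).choose (t-1) + (2t).choose t
      have hsplit : (2*t+1).choose t = (2*t).choose s + (2*t).choose t := by
        show (2*t).succ.choose (s+1) = _
        exact Nat.choose_succ_succ (2*t) s
      have hb1 : (2*t).choose s ≤ Nat.centralBinom t := Nat.choose_le_centralBinom s t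
      have hb2 : (2*t).choose t ≤ Nat.centralBinom t := Nat.choose_le_centralBinom t t
      have hc : (2*t+1).choose t ≤ 2 * Nat.centralBinom t := by omega
      have hcb := centralBinom_sq_bound t
      calc ((2*t+1).choose t)^2 * (2*t+1+1) ≤ (2 * Nat.centralBinom t)^2 * (2*t+2) :=
            Nat.mul_le_mul (Nat.pow_le_pow_left hc 2) (le_refl _)
        _ ≤ 4 * ((Nat.centralBinom t)^2 * (3*t+1)) := by
            have : 2*t+2 ≤ 3*t+1 := by omega
            nlinarith
        _ ≤ 4 * 16^t := by omega
        _ = 4^(2*t+1) := by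
            show 4 * 16^t = _
            rw [show (16:ℕ) = 4^2 from rfl, ← pow_mul, show 2*t+1 = 2*t+1 from rfl,
              pow_succ]
            ring

namespace PS
variable {α : Type} [Fintype α] [DecidableEq α]

variable {α : Type} [Fintype α] [DecidableEq α]

def eps (v : α) (W : Finset α) : ℤ := if v ∈ W then 1 else -1

lemma eps_sq (v : α) (W : Finset α) : eps v W * eps v W = 1 := by
  unfold eps; split <;> norm_num

lemma eps_symmDiff_ne (v w : α) (h : v ≠ w) (W : Finset α) :
    eps v (symmDiff W {w}) = eps v W := by
  unfold eps
  have : v ∈ symmDiff W {w} ↔ v ∈ W := by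
    simp [Finset.mem_symmDiff, h]
  simp [this]

lemma eps_symmDiff_self (w : α) (W : Finset α) :
    eps w (symmDiff W {w}) = - eps w W := by
  unfold eps
  have : w ∈ symmDiff W {w} ↔ w ∉ W := by
    simp [Finset.mem_symmDiff]
  by_cases hw : w ∈ W <;> simp [this, hw]

lemma eps_orth {v w : α} (h : v ≠ w) :
    ∑ W : Finset α, eps v W * eps w W = 0 := by
  apply Finset.sum_ninvolution (fun W => symmDiff W {w})
  · intro W
    rw [eps_symmDiff_ne v w h, eps_symmDiff_self]
    ring
  · intro W _
    intro hEq
    have h1 : w ∈ symmDiff W {w} ↔ w ∉ W := by simp [Finset.mem_symmDiff]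
    rw [hEq] at h1
    tauto
  · intro W; exact Finset.mem_univ _
  · intro W; exact symmDiff_symmDiff_cancel_right {w} W

lemma eps_sum_sq (g : α → ℤ) :
    ∑ W : Finset α, (∑ v, g v * eps v W)^2 = 2^(Fintype.card α) * ∑ v, (g v)^2 := by
  have expand : ∀ W : Finset α, (∑ v, g v * eps v W)^2
      = ∑ v, ∑ u, (g v * g u) * (eps v W * eps u W) := by
    intro W
    rw [sq, Finset.sum_mul_sum]
    apply Finset.sum_congr rfl; intro v _
    apply Finset.sum_congr rfl; intro u _
    ring
  calc ∑ W : Finset α, (∑ v, g v * eps v W)^2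
      = ∑ W : Finset α, ∑ v, ∑ u, (g v * g u) * (eps v W * eps u W) := by
        exact Finset.sum_congr rfl (fun W _ => expand W)
    _ = ∑ v, ∑ u, (g v * g u) * (∑ W : Finset α, eps v W * eps u W) := by
        rw [Finset.sum_comm]
        apply Finset.sum_congr rfl; intro v _
        rw [Finset.sum_comm]
        apply Finset.sum_congr rfl; intro u _
        rw [← Finset.mul_sum]
    _ = ∑ v, (g v * g v) * (2^(Fintype.card α)) := by
        apply Finset.sum_congr rfl; intro v _
        rw [Finset.sum_eq_single v]
        · congr 1
          have : ∀ W : Finset α, eps v W * eps v W = 1 := eps_sq v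
          rw [Finset.sum_congr rfl (fun W _ => this W), Finset.sum_const, Finset.card_univ,
            Fintype.card_finset]
          simp
        · intro u _ hu
          rw [eps_orth (Ne.symm hu)]
          ring
        · intro h; exact absurd (Finset.mem_univ v) h
    _ = 2^(Fintype.card α) * ∑ v, (g v)^2 := by
        rw [Finset.mul_sum]
        apply Finset.sum_congr rfl; intro v _
        ring



set_option linter.unusedSectionVars false
variable {α : Type} [Fintype α] [DecidableEq α]


lemma sum_eps_over (A W : Finset α) :
    ∑ v ∈ A, eps v W = 2 * ((A ∩ W).card : ℤ) - A.card := by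
  unfold eps
  have : ∀ v ∈ A, (if v ∈ W then (1:ℤ) else -1) = 2 * (if v ∈ W then 1 else 0) - 1 := by
    intro v _; split <;> norm_num
  rw [Finset.sum_congr rfl this, Finset.sum_sub_distrib, ← Finset.mul_sum, Finset.sum_boole,
    Finset.filter_mem_eq_inter, Finset.sum_const]
  simp [mul_comm]

lemma var_identity (A B : Finset α) (hAB : Disjoint A B) :
    ∑ W : Finset α, (2*(((A∩W).card : ℤ) - ((B∩W).card : ℤ)) - ((A.card : ℤ) - (B.card : ℤ)))^2
      = 2^(Fintype.card α) * ((A.card : ℤ) + B.card) := by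
  set g : α → ℤ := fun v => (if v ∈ A then 1 else 0) - (if v ∈ B then 1 else 0) with hg
  have hpt : ∀ W : Finset α, ∑ v, g v * eps v W
      = 2*(((A∩W).card : ℤ) - ((B∩W).card : ℤ)) - ((A.card : ℤ) - (B.card : ℤ)) := by
    intro W
    have : ∀ v, g v * eps v W
        = (if v ∈ A then eps v W else 0) - (if v ∈ B then eps v W else 0) := by
      intro v; rw [hg]; dsimp only; split <;> split <;> ring
    rw [Finset.sum_congr rfl (fun v _ => this v), Finset.sum_sub_distrib,
      Finset.sum_ite_mem, Finset.sum_ite_mem, Finset.univ_inter, Finset.univ_inter,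
      sum_eps_over, sum_eps_over]
    ring
  have hsq : ∑ v, (g v)^2 = ((A.card : ℤ) + B.card) := by
    have : ∀ v, (g v)^2 = (if v ∈ A then 1 else 0) + (if v ∈ B then 1 else 0) := by
      intro v; rw [hg]; dsimp only
      by_cases hA : v ∈ A
      · have hB : v ∉ B := Finset.disjoint_left.1 hAB hA
        simp [hA, hB]
      · by_cases hB : v ∈ B <;> simp [hA, hB]
    rw [Finset.sum_congr rfl (fun v _ => this v), Finset.sum_add_distrib]
    simp [Finset.sum_boole, Finset.filter_mem_eq_inter]
  rw [← hsq, ← eps_sum_sq g]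
  exact Finset.sum_congr rfl (fun W _ => by rw [hpt W])


lemma markov_real {β : Type} [Fintype β] (f : β → ℝ) (hf : ∀ b, 0 ≤ f b) (t : ℝ)
    (s : Finset β) (hs : ∀ b ∈ s, t ≤ f b) :
    (s.card : ℝ) * t ≤ ∑ b, f b := by
  calc (s.card : ℝ) * t = ∑ _b ∈ s, t := by rw [Finset.sum_const]; simp [mul_comm]
    _ ≤ ∑ b ∈ s, f b := Finset.sum_le_sum hs
    _ ≤ ∑ b, f b := Finset.sum_le_sum_of_subset_of_nonneg (Finset.subset_univ _)
        (fun b _ _ => hf b)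



set_option linter.unusedSectionVars false
variable {α : Type} [Fintype α] [DecidableEq α]


lemma card_inter_split (s t W : Finset α) :
    ((s ∩ W).card : ℤ) = (((s \ t) ∩ W).card : ℤ) + (((s ∩ t) ∩ W).card : ℤ) := by
  have hd : Disjoint ((s \ t) ∩ W) ((s ∩ t) ∩ W) :=
    (Finset.disjoint_sdiff_inter s t).mono Finset.inter_subset_left Finset.inter_subset_left
  rw [← Nat.cast_add, ← Finset.card_union_of_disjoint hd, ← Finset.union_inter_distrib_right,
    Finset.sdiff_union_inter]

lemma card_inter_sub (s t W : Finset α) :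
    ((s ∩ W).card : ℤ) - ((t ∩ W).card : ℤ)
      = (((s \ t) ∩ W).card : ℤ) - (((t \ s) ∩ W).card : ℤ) := by
  have h1 := card_inter_split s t W
  have h2 := card_inter_split t s W
  rw [Finset.inter_comm t s] at h2
  omega

lemma card_sub_card (s t : Finset α) :
    (s.card : ℤ) - (t.card : ℤ) = ((s \ t).card : ℤ) - ((t \ s).card : ℤ) := by
  have h1 := Finset.card_sdiff_add_card_inter s t
  have h2 := Finset.card_sdiff_add_card_inter t s
  rw [Finset.inter_comm t s] at h2
  omega

lemma card_symmDiff_eq (s t : Finset α) :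
    (symmDiff s t).card = (s \ t).card + (t \ s).card := by
  rw [symmDiff_def]
  exact Finset.card_union_of_disjoint disjoint_sdiff_sdiff

lemma cheb_count (A B : Finset α) (hAB : Disjoint A B)
    [DecidablePred fun W : Finset α =>
      (25*(Fintype.card α : ℝ)) <
        (((2*(((A∩W).card:ℤ) - ((B∩W).card:ℤ)) - ((A.card:ℤ) - (B.card:ℤ))) : ℝ))^2] :
    ((univ.filter fun W : Finset α =>
      (25*(Fintype.card α : ℝ)) <
        (((2*(((A∩W).card:ℤ) - ((B∩W).card:ℤ)) - ((A.card:ℤ) - (B.card:ℤ))) : ℝ))^2).card : ℝ)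
        * (25 * Fintype.card α)
      ≤ 2^(Fintype.card α) * ((A.card : ℝ) + B.card) := by
  have h := markov_real (β := Finset α)
    (fun W => (((2*(((A∩W).card:ℤ) - ((B∩W).card:ℤ)) - ((A.card:ℤ) - (B.card:ℤ))) : ℝ))^2)
    (fun W => sq_nonneg _) (25*(Fintype.card α : ℝ))
    (univ.filter fun W : Finset α =>
      (25*(Fintype.card α : ℝ)) <
        (((2*(((A∩W).card:ℤ) - ((B∩W).card:ℤ)) - ((A.card:ℤ) - (B.card:ℤ))) : ℝ))^2)
    (fun W hW => le_of_lt (Finset.mem_filter.1 hW).2)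
  refine h.trans ?_
  have := var_identity A B hAB
  have hcast : ∑ W : Finset α,
      (((2*(((A∩W).card:ℤ) - ((B∩W).card:ℤ)) - ((A.card:ℤ) - (B.card:ℤ))) : ℝ))^2
      = ((∑ W : Finset α,
          (2*(((A∩W).card : ℤ) - ((B∩W).card : ℤ)) - ((A.card : ℤ) - (B.card : ℤ)))^2 : ℤ) : ℝ) := by
    push_cast
    rfl
  rw [hcast, this]
  push_cast
  rfl


set_option linter.unusedSectionVars false
variable {α : Type} [Fintype α] [DecidableEq α]

lemma count_level (A B : Finset α) (hAB : Disjoint A B) (c : ℤ) :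
    (univ.filter fun W : Finset α => ((A∩W).card : ℤ) - ((B∩W).card : ℤ) = c).card
      ≤ A.card.choose (A.card / 2) * 2^(Fintype.card α - A.card) := by
  set s := univ.filter fun W : Finset α => ((A∩W).card : ℤ) - ((B∩W).card : ℤ) = c with hs
  have hmap : ∀ W ∈ s, W \ A ∈ Aᶜ.powerset := by
    intro W _
    exact Finset.mem_powerset.2 (fun v hv => Finset.mem_compl.2 (Finset.mem_sdiff.1 hv).2)
  rw [Finset.card_eq_sum_card_fiberwise hmap]
  have hfib : ∀ u ∈ Aᶜ.powerset, (s.filter fun W => W \ A = u).card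
      ≤ A.card.choose (A.card / 2) := by
    intro u _
    set sval := (c + ((B ∩ u).card : ℤ)).toNat with hsval
    have : (s.filter fun W => W \ A = u).card ≤ (A.powersetCard sval).card := by
      apply Finset.card_le_card_of_injOn (fun W => W ∩ A)
      · intro W hW
        obtain ⟨hW1, hW2⟩ := Finset.mem_filter.1 hW
        obtain ⟨_, hcond⟩ := Finset.mem_filter.1 hW1
        have hBW : B ∩ W = B ∩ u := by
          ext v
          simp only [Finset.mem_inter]
          constructor
          · rintro ⟨hvB, hvW⟩
            refine ⟨hvB, ?_⟩
            rw [← hW2]; exact Finset.mem_sdiff.2 ⟨hvW, Finset.disjoint_left.1 hAB.symm hvB⟩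
          · rintro ⟨hvB, hvu⟩
            rw [← hW2] at hvu
            exact ⟨hvB, (Finset.mem_sdiff.1 hvu).1⟩
        rw [Finset.inter_comm B W] at hBW
        apply Finset.mem_powersetCard.2
        refine ⟨Finset.inter_subset_right, ?_⟩
        have hcard : ((A ∩ W).card : ℤ) = c + ((B ∩ u).card : ℤ) := by
          rw [← hBW, Finset.inter_comm W B]
          omega
        show (W ∩ A).card = sval
        rw [Finset.inter_comm W A]
        omega
      · intro W₁ h₁ W₂ h₂ hEq
        have hEq' : W₁ ∩ A = W₂ ∩ A := hEq
        have e₁ : W₁ \ A = u := (Finset.mem_filter.1 h₁).2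
        have e₂ : W₂ \ A = u := (Finset.mem_filter.1 h₂).2
        have : W₁ \ A ∪ W₁ ∩ A = W₂ \ A ∪ W₂ ∩ A := by rw [e₁, e₂, hEq']
        rwa [Finset.sdiff_union_inter, Finset.sdiff_union_inter] at this
    rw [Finset.card_powersetCard] at this
    exact this.trans (Nat.choose_le_middle _ _)
  calc ∑ u ∈ Aᶜ.powerset, (s.filter fun W => W \ A = u).card
      ≤ ∑ _u ∈ Aᶜ.powerset, A.card.choose (A.card / 2) := Finset.sum_le_sum hfib
    _ = A.card.choose (A.card / 2) * 2^(Fintype.card α - A.card) := by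
        rw [Finset.sum_const, Finset.card_powerset, Finset.card_compl]
        simp [mul_comm]

lemma count_level_real (A B : Finset α) (hAB : Disjoint A B) (c : ℤ) :
    ((univ.filter fun W : Finset α => ((A∩W).card : ℤ) - ((B∩W).card : ℤ) = c).card : ℝ)
      ≤ 2^(Fintype.card α) / Real.sqrt (A.card + 1) := by
  set a := A.card with ha
  have han : a ≤ Fintype.card α := by rw [ha]; exact Finset.card_le_univ A
  have h1 : ((a.choose (a/2) : ℝ)) ≤ 2^a / Real.sqrt (a+1) := by
    have hb := choose_middle_sq_bound a
    have hbR : ((a.choose (a/2) : ℝ))^2 * (a+1) ≤ 4^a := by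
      have := Nat.cast_le (α := ℝ) |>.2 hb
      push_cast at this
      convert this using 2 <;> norm_num
    have hsq : ((a.choose (a/2) : ℝ))^2 ≤ (4:ℝ)^a / (a+1) := by
      rw [le_div_iff₀ (by positivity)]
      exact hbR
    calc ((a.choose (a/2) : ℝ)) = Real.sqrt (((a.choose (a/2) : ℝ))^2) :=
          (Real.sqrt_sq (by positivity)).symm
      _ ≤ Real.sqrt ((4:ℝ)^a / (a+1)) := Real.sqrt_le_sqrt hsq
      _ = 2^a / Real.sqrt (a+1) := by
          rw [Real.sqrt_div (by positivity : (0:ℝ) ≤ (4:ℝ)^a) ((a:ℝ)+1)]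
          congr 1
          rw [show ((4:ℝ)^a) = ((2:ℝ)^a)^2 by rw [← pow_mul, mul_comm, pow_mul]; norm_num]
          exact Real.sqrt_sq (by positivity)
  calc ((univ.filter fun W : Finset α => ((A∩W).card : ℤ) - ((B∩W).card : ℤ) = c).card : ℝ)
      ≤ (a.choose (a/2) : ℝ) * 2^(Fintype.card α - a) := by
        have := count_level A B hAB c
        rw [← ha] at this
        exact_mod_cast Nat.cast_le.2 this
    _ ≤ (2^a / Real.sqrt (a+1)) * 2^(Fintype.card α - a) := by
        apply mul_le_mul_of_nonneg_right h1 (by positivity)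
    _ = 2^(Fintype.card α) / Real.sqrt (a+1) := by
        rw [div_mul_eq_mul_div, ← pow_add]
        congr 2
        omega




lemma sum_fib_sq {ι β : Type} [DecidableEq β] [DecidableEq ι] (S : Finset ι) (f : ι → β) :
    ∑ v ∈ S.image f, ((S.filter fun i => f i = v).card)^2
      = ((S ×ˢ S).filter fun p => f p.1 = f p.2).card := by
  have hmap : ∀ p ∈ (S ×ˢ S).filter fun p => f p.1 = f p.2, f p.1 ∈ S.image f := by
    intro p hp
    obtain ⟨hp1, _⟩ := Finset.mem_filter.1 hp
    exact Finset.mem_image_of_mem f (Finset.mem_product.1 hp1).1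
  rw [Finset.card_eq_sum_card_fiberwise hmap]
  apply Finset.sum_congr rfl
  intro v _
  have : (((S ×ˢ S).filter fun p => f p.1 = f p.2).filter fun p => f p.1 = v)
      = (S.filter fun i => f i = v) ×ˢ (S.filter fun i => f i = v) := by
    ext p
    simp only [Finset.mem_filter, Finset.mem_product]
    constructor
    · rintro ⟨⟨⟨h1, h2⟩, h3⟩, h4⟩
      exact ⟨⟨h1, h4⟩, ⟨h2, h3 ▸ h4⟩⟩
    · rintro ⟨⟨h1, h4⟩, ⟨h2, h5⟩⟩
      exact ⟨⟨⟨h1, h2⟩, by rw [h4, h5]⟩, h4⟩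
  rw [this, Finset.card_product, sq]

lemma distinct_values {ι β : Type} [DecidableEq β] [DecidableEq ι] (S : Finset ι) (f : ι → β)
    (P : ℕ) (hP : (((S ×ˢ S).filter fun p => p.1 ≠ p.2 ∧ f p.1 = f p.2).card) ≤ P) :
    (S.card : ℝ)^2 ≤ ((S.image f).card : ℝ) * (S.card + P) := by
  have h1 : S.card = ∑ v ∈ S.image f, (S.filter fun i => f i = v).card :=
    Finset.card_eq_sum_card_fiberwise (fun i hi => Finset.mem_image_of_mem f hi)
  have h2 : ((S ×ˢ S).filter fun p => f p.1 = f p.2).card ≤ S.card + P := by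
    have hsplit := Finset.card_filter_add_card_filter_not
      (s := (S ×ˢ S).filter fun p => f p.1 = f p.2) (p := fun p => p.1 = p.2)
    have hdiag : (((S ×ˢ S).filter fun p => f p.1 = f p.2).filter fun p => p.1 = p.2).card
        ≤ S.card := by
      apply Finset.card_le_card_of_injOn (fun p => p.1)
      · intro p hp
        obtain ⟨hp1, _⟩ := Finset.mem_filter.1 hp
        exact (Finset.mem_product.1 (Finset.mem_filter.1 hp1).1).1
      · intro p hp q hq hpq
        obtain ⟨_, hp2⟩ := Finset.mem_filter.1 hp
        obtain ⟨_, hq2⟩ := Finset.mem_filter.1 hq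
        have : p.1 = q.1 := hpq
        exact Prod.ext this (by rw [← hp2, ← hq2, this])
    have hoff : (((S ×ˢ S).filter fun p => f p.1 = f p.2).filter fun p => ¬ p.1 = p.2).card
        ≤ P := by
      refine le_trans (Finset.card_le_card ?_) hP
      intro p hp
      obtain ⟨hp1, hp2⟩ := Finset.mem_filter.1 hp
      obtain ⟨hp3, hp4⟩ := Finset.mem_filter.1 hp1
      exact Finset.mem_filter.2 ⟨hp3, hp2, hp4⟩
    omega
  have h3 := PS.sum_fib_sq S f
  have hCS : ((∑ v ∈ S.image f, ((S.filter fun i => f i = v).card : ℝ)))^2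
      ≤ ((S.image f).card : ℝ) * ∑ v ∈ S.image f, ((S.filter fun i => f i = v).card : ℝ)^2 :=
    sq_sum_le_card_mul_sum_sq
  have e1 : (S.card : ℝ) = ∑ v ∈ S.image f, ((S.filter fun i => f i = v).card : ℝ) := by
    rw [h1]; push_cast; rfl
  have e2 : ∑ v ∈ S.image f, ((S.filter fun i => f i = v).card : ℝ)^2
      ≤ (S.card : ℝ) + P := by
    have : ∑ v ∈ S.image f, ((S.filter fun i => f i = v).card : ℝ)^2
        = ((∑ v ∈ S.image f, ((S.filter fun i => f i = v).card)^2 : ℕ) : ℝ) := by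
      push_cast; rfl
    rw [this, h3]
    exact_mod_cast (h2 : _)
  calc (S.card : ℝ)^2 = (∑ v ∈ S.image f, ((S.filter fun i => f i = v).card : ℝ))^2 := by
        rw [e1]
    _ ≤ ((S.image f).card : ℝ) * ∑ v ∈ S.image f, ((S.filter fun i => f i = v).card : ℝ)^2 :=
        hCS
    _ ≤ ((S.image f).card : ℝ) * ((S.card : ℝ) + P) := by
        apply mul_le_mul_of_nonneg_left e2 (by positivity)


end PS

def IsPairStar {V1 V2 : Type} [Fintype V2] [DecidableEq V2]
    (E : V1 → V2 → Prop) [∀ a b, Decidable (E a b)] (ε : ℝ) (k : ℕ)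
    (x : Fin (k + 1) → V1) : Prop :=
  Function.Injective x ∧
  (∀ j : Fin (k + 1), |((nbr E (x j)).card : ℝ) - ((nbr E (x 0)).card : ℝ)| ≤
      Real.sqrt (Fintype.card V2)) ∧
  (∀ i j : Fin (k + 1), i ≠ j →
      ε * Fintype.card V2 ≤ ((symmDiff (nbr E (x i)) (nbr E (x j))).card : ℝ))

theorem stmt13 (ε : ℝ) (hε : 0 < ε) :
    ∃ δ : ℝ, 0 < δ ∧
      ∀ (V1 V2 : Type) [Fintype V1] [Fintype V2] [DecidableEq V2]
        (E : V1 → V2 → Prop) [∀ a b, Decidable (E a b)]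
        (k : ℕ), k = Nat.sqrt (Fintype.card V2) →
        (Fintype.card V2 : ℝ) / 2 ≤ Fintype.card V1 →
        ∀ x : Fin (k + 1) → V1, IsPairStar E ε k x →
        (3 : ℝ) / 4 * 2 ^ (Fintype.card V2) ≤
          (((Finset.univ : Finset (Finset V2)).filter (fun W =>
            δ * Real.sqrt (Fintype.card V2) ≤
              ((((Finset.univ : Finset (Fin k)).image (fun i =>
                    ((nbr E (x i.succ) ∩ W).card : ℤ) - ((nbr E (x 0) ∩ W).card : ℤ))).filter
                  (fun z : ℤ => ((|z| : ℤ) : ℝ) ≤ 3 * Real.sqrt (Fintype.card V2))).card : ℝ))).card : ℝ) := by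
  classical
  have hse : 0 < Real.sqrt ε := Real.sqrt_pos.2 hε
  have hs2 : 0 < Real.sqrt 2 := by positivity
  refine ⟨Real.sqrt ε / (8 * Real.sqrt ε + 128 * Real.sqrt 2), by positivity, ?_⟩
  set δ := Real.sqrt ε / (8 * Real.sqrt ε + 128 * Real.sqrt 2) with hδdef
  intro V1 V2 _ _ _ E _ k hk hV1 x hx
  obtain ⟨hinj, hdeg, hsd⟩ := hx
  set n := Fintype.card V2 with hn
  rcases Nat.eq_zero_or_pos n with h0 | hnpos
  · -- trivial case n = 0
    have hall : ∀ W ∈ (Finset.univ : Finset (Finset V2)), δ * Real.sqrt n ≤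
        ((((Finset.univ : Finset (Fin k)).image (fun i =>
            ((nbr E (x i.succ) ∩ W).card : ℤ) - ((nbr E (x 0) ∩ W).card : ℤ))).filter
          (fun z : ℤ => ((|z| : ℤ) : ℝ) ≤ 3 * Real.sqrt n)).card : ℝ) := by
      intro W _
      rw [h0]
      simp only [Nat.cast_zero, Real.sqrt_zero, mul_zero]
      positivity
    rw [Finset.filter_true_of_mem hall, Finset.card_univ, Fintype.card_finset, ← hn, h0]
    norm_num
  -- main case
  have hk1 : 1 ≤ k := by
    rw [hk]
    exact_mod_cast Nat.one_le_iff_ne_zero.2 (fun h => by simp [Nat.sqrt_eq_zero] at h <;> omega)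
  have hnR : (0:ℝ) < n := by exact_mod_cast hnpos
  have hsn : 0 < Real.sqrt n := Real.sqrt_pos.2 hnR
  have hkR : (1:ℝ) ≤ (k:ℝ) := by exact_mod_cast hk1
  have hkpos : (0:ℝ) < (k:ℝ) := by linarith
  have hksn : (k:ℝ) ≤ Real.sqrt n := by
    rw [show ((k:ℝ)) = Real.sqrt ((k:ℝ)^2) from (Real.sqrt_sq hkpos.le).symm]
    apply Real.sqrt_le_sqrt
    have : k^2 ≤ n := by rw [hk]; exact Nat.sqrt_le' n
    exact_mod_cast this
  have hsn2k : Real.sqrt n ≤ 2*(k:ℝ) := by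
    have h1 : n ≤ (k+1)^2 := by
      rw [hk]
      exact le_of_lt (Nat.lt_succ_sqrt' n)
    calc Real.sqrt n ≤ Real.sqrt (((k:ℝ)+1)^2) := by
          apply Real.sqrt_le_sqrt; exact_mod_cast h1
      _ = (k:ℝ)+1 := Real.sqrt_sq (by positivity)
      _ ≤ 2*(k:ℝ) := by linarith
  -- notation
  set z : Fin k → Finset V2 → ℤ :=
    fun i W => ((nbr E (x i.succ) ∩ W).card : ℤ) - ((nbr E (x 0) ∩ W).card : ℤ) with hzdef
  set pairs : Finset (Fin k × Fin k) := Finset.univ.filter (fun p => p.1 ≠ p.2) with hpairs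
  set PW : Finset V2 → ℕ := fun W => (pairs.filter (fun p => z p.1 W = z p.2 W)).card with hPW
  set OutW : Finset V2 → ℕ := fun W =>
    (Finset.univ.filter (fun i : Fin k =>
      ¬ ((|z i W| : ℝ) ≤ 3 * Real.sqrt n))).card with hOutW
  set q : ℝ := Real.sqrt (ε * n / 2) with hq
  have hqpos : 0 < q := by rw [hq]; apply Real.sqrt_pos.2; positivity
  have hq2 : q * Real.sqrt 2 = Real.sqrt ε * Real.sqrt n := by
    rw [hq, ← Real.sqrt_mul (by positivity), ← Real.sqrt_mul hε.le]
    congr 1; ring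
  have hks : (k:ℝ) * Real.sqrt ε ≤ q * Real.sqrt 2 := by
    rw [hq2]
    calc (k:ℝ) * Real.sqrt ε ≤ Real.sqrt n * Real.sqrt ε :=
          mul_le_mul_of_nonneg_right hksn hse.le
      _ = Real.sqrt ε * Real.sqrt n := mul_comm _ _
  set P0 : ℝ := 16*(k:ℝ)^2/q with hP0
  have hP0pos : 0 < P0 := by rw [hP0]; positivity
  set B1 := Finset.univ.filter (fun W : Finset V2 => P0 < (PW W : ℝ)) with hB1
  set B2 := Finset.univ.filter (fun W : Finset V2 => (k:ℝ)/2 < (OutW W : ℝ)) with hB2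
  -- Step A: per-pair collision bound
  have stepA : ∀ p ∈ pairs,
      ((Finset.univ.filter (fun W : Finset V2 => z p.1 W = z p.2 W)).card : ℝ) ≤ 2^n / q := by
    intro p hp
    have hne : p.1 ≠ p.2 := by
      have := (Finset.mem_filter.1 (hpairs ▸ hp)).2
      exact this
    set s := nbr E (x p.1.succ) with hs
    set t := nbr E (x p.2.succ) with ht
    have hsucc : (p.1.succ : Fin (k+1)) ≠ p.2.succ := by
      intro h
      exact hne (by exact_mod_cast Fin.succ_injective k h)
    have hm : ε * (n:ℝ) ≤ ((s \ t).card : ℝ) + ((t \ s).card : ℝ) := by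
      have h1 := hsd p.1.succ p.2.succ hsucc
      rw [PS.card_symmDiff_eq] at h1
      push_cast at h1
      exact h1
    have hiff : ∀ W : Finset V2, z p.1 W = z p.2 W ↔
        (((s \ t) ∩ W).card : ℤ) - (((t \ s) ∩ W).card : ℤ) = 0 := by
      intro W
      have e : z p.1 W - z p.2 W
          = (((s \ t) ∩ W).card : ℤ) - (((t \ s) ∩ W).card : ℤ) := by
        simp only [hzdef]
        rw [← PS.card_inter_sub s t W]
        ring
      omega
    rcases le_total ((s \ t).card) ((t \ s).card) with hc | hc
    · have hEq : Finset.univ.filter (fun W : Finset V2 => z p.1 W = z p.2 W)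
          = Finset.univ.filter (fun W : Finset V2 =>
              (((t \ s) ∩ W).card : ℤ) - (((s \ t) ∩ W).card : ℤ) = 0) := by
        apply Finset.filter_congr
        intro W _
        rw [hiff W]
        omega
      rw [hEq]
      refine (PS.count_level_real (t \ s) (s \ t) disjoint_sdiff_sdiff 0).trans ?_
      have hqle : q ≤ Real.sqrt (((t \ s).card : ℝ) + 1) := by
        rw [hq]
        apply Real.sqrt_le_sqrt
        have hcR : ((s \ t).card : ℝ) ≤ ((t \ s).card : ℝ) := by exact_mod_cast hc
        linarith
      rw [← hn]
      gcongr
    · have hEq : Finset.univ.filter (fun W : Finset V2 => z p.1 W = z p.2 W)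
          = Finset.univ.filter (fun W : Finset V2 =>
              (((s \ t) ∩ W).card : ℤ) - (((t \ s) ∩ W).card : ℤ) = 0) := by
        apply Finset.filter_congr
        intro W _
        rw [hiff W]
      rw [hEq]
      refine (PS.count_level_real (s \ t) (t \ s) disjoint_sdiff_sdiff 0).trans ?_
      have hqle : q ≤ Real.sqrt (((s \ t).card : ℝ) + 1) := by
        rw [hq]
        apply Real.sqrt_le_sqrt
        have hcR : ((t \ s).card : ℝ) ≤ ((s \ t).card : ℝ) := by exact_mod_cast hc
        linarith
      rw [← hn]
      gcongr
  -- Step B: expected number of collisions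
  have stepB : ∑ W : Finset V2, (PW W : ℝ) ≤ (k:ℝ)^2 * (2^n / q) := by
    have hswap : ∑ W : Finset V2, (PW W : ℕ)
        = ∑ p ∈ pairs, (Finset.univ.filter (fun W : Finset V2 => z p.1 W = z p.2 W)).card := by
      simp only [hPW, Finset.card_filter]
      exact Finset.sum_comm
    have hcast : ∑ W : Finset V2, (PW W : ℝ)
        = ∑ p ∈ pairs, ((Finset.univ.filter (fun W : Finset V2 => z p.1 W = z p.2 W)).card : ℝ) := by
      rw [← Nat.cast_sum, hswap, Nat.cast_sum]
    rw [hcast]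
    calc ∑ p ∈ pairs, ((Finset.univ.filter (fun W : Finset V2 => z p.1 W = z p.2 W)).card : ℝ)
        ≤ ∑ _p ∈ pairs, (2^n/q : ℝ) := Finset.sum_le_sum stepA
      _ = (pairs.card : ℝ) * (2^n/q) := by rw [Finset.sum_const]; simp [mul_comm]
      _ ≤ (k:ℝ)^2 * (2^n/q) := by
          apply mul_le_mul_of_nonneg_right _ (by positivity)
          have h1 : pairs.card ≤ k*k := by
            calc pairs.card ≤ (Finset.univ : Finset (Fin k × Fin k)).card :=
                  Finset.card_le_card (by rw [hpairs]; exact Finset.filter_subset _ _)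
              _ = k*k := by rw [Finset.card_univ]; simp
          have : ((pairs.card : ℕ) : ℝ) ≤ ((k*k : ℕ) : ℝ) := by exact_mod_cast h1
          calc (pairs.card : ℝ) ≤ ((k*k : ℕ) : ℝ) := this
            _ = (k:ℝ)^2 := by push_cast; ring
  -- Step C: B1 is small
  have stepC : (B1.card : ℝ) ≤ 2^n/16 := by
    have hmark := PS.markov_real (fun W : Finset V2 => (PW W : ℝ))
      (fun W => Nat.cast_nonneg _) P0 B1
      (fun W hW => by
        rw [hB1] at hW
        exact le_of_lt (Finset.mem_filter.1 hW).2)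
    have h1 : (B1.card : ℝ) * P0 ≤ (k:ℝ)^2*(2^n/q) := le_trans hmark stepB
    have h2 : (B1.card:ℝ) * (16*(k:ℝ)^2) ≤ (k:ℝ)^2 * 2^n := by
      have h3 := mul_le_mul_of_nonneg_right h1 hqpos.le
      rw [hP0] at h3
      rw [mul_assoc, div_mul_cancel₀ _ hqpos.ne'] at h3
      rw [mul_assoc, div_mul_cancel₀ _ hqpos.ne'] at h3
      exact h3
    have hk2 : (0:ℝ) < (k:ℝ)^2 := by positivity
    rw [le_div_iff₀ (by norm_num : (0:ℝ) < 16)]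
    apply le_of_mul_le_mul_right _ hk2
    calc (B1.card:ℝ) * 16 * (k:ℝ)^2 = (B1.card:ℝ) * (16*(k:ℝ)^2) := by ring
      _ ≤ (k:ℝ)^2 * 2^n := h2
      _ = 2^n * (k:ℝ)^2 := by ring
  -- Step D: per-index tail bound
  have stepD : ∀ i : Fin k,
      ((Finset.univ.filter (fun W : Finset V2 =>
        ¬ ((|z i W| : ℝ) ≤ 3 * Real.sqrt n))).card : ℝ) ≤ 2^n/25 := by
    intro i
    set A := nbr E (x i.succ) \ nbr E (x 0) with hA
    set B := nbr E (x 0) \ nbr E (x i.succ) with hB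
    have hd : Disjoint A B := disjoint_sdiff_sdiff
    have hsub : Finset.univ.filter (fun W : Finset V2 => ¬ ((|z i W| : ℝ) ≤ 3 * Real.sqrt n))
        ⊆ Finset.univ.filter (fun W : Finset V2 =>
          (25*((Fintype.card V2) : ℝ)) <
            (((2*(((A∩W).card:ℤ) - ((B∩W).card:ℤ)) - ((A.card:ℤ) - (B.card:ℤ))) : ℝ))^2) := by
      intro W hW
      refine Finset.mem_filter.2 ⟨Finset.mem_univ _, ?_⟩
      by_contra hcon
      push_neg at hcon
      apply (Finset.mem_filter.1 hW).2
      set F : ℤ := 2*(((A∩W).card:ℤ) - ((B∩W).card:ℤ)) - ((A.card:ℤ) - (B.card:ℤ)) with hF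
      have hzF : 2 * z i W = F + (((nbr E (x i.succ)).card : ℤ) - ((nbr E (x 0)).card : ℤ)) := by
        simp only [hzdef, hF, hA, hB]
        rw [PS.card_inter_sub (nbr E (x i.succ)) (nbr E (x 0)) W,
            PS.card_sub_card (nbr E (x i.succ)) (nbr E (x 0))]
        ring
      have hcon' : ((F:ℝ))^2 ≤ 25*((n:ℕ):ℝ) := by
        rw [hF]
        push_cast
        push_cast at hcon
        rw [hn]
        convert hcon using 2
      have hFle : |(F:ℝ)| ≤ 5 * Real.sqrt n := by
        rw [← Real.sqrt_sq (abs_nonneg (F:ℝ)), sq_abs]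
        calc Real.sqrt (((F:ℝ))^2) ≤ Real.sqrt (25*(n:ℝ)) := by
              apply Real.sqrt_le_sqrt
              exact hcon'
          _ = 5 * Real.sqrt n := by
              rw [show (25:ℝ)*(n:ℝ) = 5^2*(n:ℝ) by norm_num,
                Real.sqrt_mul (by positivity : (0:ℝ) ≤ (5:ℝ)^2),
                Real.sqrt_sq (by norm_num : (0:ℝ) ≤ (5:ℝ))]
      have hdi := hdeg i.succ
      have hzR : 2 * ((z i W : ℤ) : ℝ)
          = (F : ℝ) + (((nbr E (x i.succ)).card : ℝ) - ((nbr E (x 0)).card : ℝ)) := by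
        have := congrArg (fun m : ℤ => (m : ℝ)) hzF
        push_cast at this
        push_cast
        linarith
      have habs : |((z i W : ℤ) : ℝ)| ≤ 3 * Real.sqrt n := by
        have h6 : |2 * ((z i W : ℤ) : ℝ)| ≤ 6 * Real.sqrt n := by
          rw [hzR]
          calc |(F : ℝ) + (((nbr E (x i.succ)).card : ℝ) - ((nbr E (x 0)).card : ℝ))|
              ≤ |(F : ℝ)| + |((nbr E (x i.succ)).card : ℝ) - ((nbr E (x 0)).card : ℝ)| :=
                abs_add_le _ _
            _ ≤ 5 * Real.sqrt n + Real.sqrt n := add_le_add hFle hdi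
            _ = 6 * Real.sqrt n := by ring
        rw [abs_mul, abs_two] at h6
        linarith
      exact habs
    have hcard := Finset.card_le_card hsub
    have hcheb := PS.cheb_count A B hd
    have hABn : (A.card : ℝ) + B.card ≤ n := by
      have h1 := PS.card_symmDiff_eq (nbr E (x i.succ)) (nbr E (x 0))
      have h2 : (symmDiff (nbr E (x i.succ)) (nbr E (x 0))).card ≤ n := by
        rw [hn]
        rw [← Finset.card_univ (α := V2)]
        exact Finset.card_le_univ _
      rw [h1] at h2
      have : A.card + B.card ≤ n := by rw [hA, hB]; exact h2
      exact_mod_cast this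
    have h2n : (0:ℝ) ≤ (2:ℝ)^n := by positivity
    have hfin : ((Finset.univ.filter (fun W : Finset V2 =>
          (25*((Fintype.card V2) : ℝ)) <
            (((2*(((A∩W).card:ℤ) - ((B∩W).card:ℤ)) - ((A.card:ℤ) - (B.card:ℤ))) : ℝ))^2)).card : ℝ)
        ≤ 2^n/25 := by
      have hch : ((Finset.univ.filter (fun W : Finset V2 =>
          (25*((Fintype.card V2) : ℝ)) <
            (((2*(((A∩W).card:ℤ) - ((B∩W).card:ℤ)) - ((A.card:ℤ) - (B.card:ℤ))) : ℝ))^2)).card : ℝ)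
            * (25 * (n:ℝ)) ≤ 2^n * (n:ℝ) := by
        refine le_trans ?_ (mul_le_mul_of_nonneg_left hABn h2n)
        exact hcheb
      rw [le_div_iff₀ (by norm_num : (0:ℝ) < 25)]
      apply le_of_mul_le_mul_right _ hnR
      calc ((Finset.univ.filter (fun W : Finset V2 =>
          (25*((Fintype.card V2) : ℝ)) <
            (((2*(((A∩W).card:ℤ) - ((B∩W).card:ℤ)) - ((A.card:ℤ) - (B.card:ℤ))) : ℝ))^2)).card : ℝ)
            * 25 * (n:ℝ)
          = ((Finset.univ.filter (fun W : Finset V2 =>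
          (25*((Fintype.card V2) : ℝ)) <
            (((2*(((A∩W).card:ℤ) - ((B∩W).card:ℤ)) - ((A.card:ℤ) - (B.card:ℤ))) : ℝ))^2)).card : ℝ)
            * (25 * (n:ℝ)) := by ring
        _ ≤ 2^n * (n:ℝ) := hch
    refine le_trans ?_ hfin
    exact_mod_cast Nat.cast_le.2 hcard
  -- Step E: expected number of out-of-window indices
  have stepE : ∑ W : Finset V2, (OutW W : ℝ) ≤ (k:ℝ) * (2^n/25) := by
    have hswap : ∑ W : Finset V2, (OutW W : ℕ)
        = ∑ i : Fin k, (Finset.univ.filter (fun W : Finset V2 =>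
            ¬ ((|z i W| : ℝ) ≤ 3 * Real.sqrt n))).card := by
      simp only [hOutW, Finset.card_filter]
      exact Finset.sum_comm
    have hcast : ∑ W : Finset V2, (OutW W : ℝ)
        = ∑ i : Fin k, ((Finset.univ.filter (fun W : Finset V2 =>
            ¬ ((|z i W| : ℝ) ≤ 3 * Real.sqrt n))).card : ℝ) := by
      rw [← Nat.cast_sum, hswap, Nat.cast_sum]
    rw [hcast]
    calc ∑ i : Fin k, ((Finset.univ.filter (fun W : Finset V2 =>
            ¬ ((|z i W| : ℝ) ≤ 3 * Real.sqrt n))).card : ℝ)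
        ≤ ∑ _i : Fin k, (2^n/25 : ℝ) := Finset.sum_le_sum (fun i _ => stepD i)
      _ = (k:ℝ) * (2^n/25) := by rw [Finset.sum_const]; simp [mul_comm]
  -- Step F: B2 is small
  have stepF : (B2.card : ℝ) ≤ 2*2^n/25 := by
    have hmark := PS.markov_real (fun W : Finset V2 => (OutW W : ℝ))
      (fun W => Nat.cast_nonneg _) ((k:ℝ)/2) B2
      (fun W hW => by
        rw [hB2] at hW
        exact le_of_lt (Finset.mem_filter.1 hW).2)
    have h1 : (B2.card : ℝ) * ((k:ℝ)/2) ≤ (k:ℝ)*(2^n/25) := le_trans hmark stepE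
    have hk2pos : (0:ℝ) < (k:ℝ)/2 := by positivity
    apply le_of_mul_le_mul_right _ hk2pos
    calc (B2.card : ℝ) * ((k:ℝ)/2) ≤ (k:ℝ)*(2^n/25) := h1
      _ = 2*2^n/25 * ((k:ℝ)/2) := by ring
  -- Step G: good W satisfy the conclusion
  have stepG : ∀ W : Finset V2, ¬ (P0 < (PW W : ℝ)) → ¬ ((k:ℝ)/2 < (OutW W : ℝ)) →
      δ * Real.sqrt n ≤
        (((((Finset.univ : Finset (Fin k)).image (fun i =>
            ((nbr E (x i.succ) ∩ W).card : ℤ) - ((nbr E (x 0) ∩ W).card : ℤ))).filter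
          (fun y : ℤ => ((|y| : ℤ) : ℝ) ≤ 3 * Real.sqrt n)).card) : ℝ) := by
    intro W hPb hOb
    push_neg at hPb hOb
    set TT := (((Finset.univ : Finset (Fin k)).image (fun i =>
        ((nbr E (x i.succ) ∩ W).card : ℤ) - ((nbr E (x 0) ∩ W).card : ℤ))).filter
      (fun y : ℤ => ((|y| : ℤ) : ℝ) ≤ 3 * Real.sqrt n)) with hTT
    set S := Finset.univ.filter (fun i : Fin k => (|z i W| : ℝ) ≤ 3 * Real.sqrt n) with hS
    have hsplitS : S.card + OutW W = k := by
      rw [hS, hOutW]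
      rw [Finset.card_filter_add_card_filter_not]
      simp
    have hScard : (k:ℝ)/2 ≤ (S.card : ℝ) := by
      have hc : (S.card : ℝ) + (OutW W : ℝ) = (k:ℝ) := by exact_mod_cast hsplitS
      linarith
    have hSk : (S.card : ℝ) ≤ (k:ℝ) := by
      have : S.card ≤ k := by
        calc S.card ≤ (Finset.univ : Finset (Fin k)).card := Finset.card_filter_le _ _
          _ = k := by simp
      exact_mod_cast this
    have hPle : (((S ×ˢ S).filter fun p => p.1 ≠ p.2 ∧ z p.1 W = z p.2 W).card) ≤ PW W := by
      rw [hPW]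
      apply Finset.card_le_card
      intro p hp
      obtain ⟨hp1, hp2, hp3⟩ := Finset.mem_filter.1 hp
      refine Finset.mem_filter.2 ⟨?_, hp3⟩
      rw [hpairs]
      exact Finset.mem_filter.2 ⟨Finset.mem_univ _, hp2⟩
    have hdv := PS.distinct_values S (fun i => z i W) (PW W) hPle
    have hJT : S.image (fun i => z i W) ⊆ TT := by
      intro v hv
      obtain ⟨i, hiS, hiv⟩ := Finset.mem_image.1 hv
      rw [hTT]
      refine Finset.mem_filter.2 ⟨?_, ?_⟩
      · refine Finset.mem_image.2 ⟨i, Finset.mem_univ _, ?_⟩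
        rw [← hiv]
      · rw [← hiv, Int.cast_abs]
        exact (Finset.mem_filter.1 hiS).2
    have hTcard : ((S.image (fun i => z i W)).card : ℝ) ≤ (TT.card : ℝ) := by
      exact_mod_cast Nat.cast_le.2 (Finset.card_le_card hJT)
    have hTnonneg : (0:ℝ) ≤ (TT.card : ℝ) := Nat.cast_nonneg _
    have hcomb : ((k:ℝ)/2)^2 ≤ (TT.card : ℝ) * ((k:ℝ) + P0) := by
      calc ((k:ℝ)/2)^2 ≤ (S.card:ℝ)^2 := by
            apply pow_le_pow_left₀ (by positivity) hScard
        _ ≤ ((S.image (fun i => z i W)).card : ℝ) * ((S.card : ℝ) + (PW W : ℝ)) := hdv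
        _ ≤ (TT.card : ℝ) * ((k:ℝ) + P0) := by
            apply mul_le_mul hTcard (add_le_add hSk hPb)
              (add_nonneg (Nat.cast_nonneg _) (Nat.cast_nonneg _)) hTnonneg
    have hδq : δ * (8*Real.sqrt ε + 128*Real.sqrt 2) = Real.sqrt ε := by
      rw [hδdef]
      field_simp
    have hP0q : P0 * q = 16*(k:ℝ)^2 := by
      rw [hP0]
      field_simp
    have hδnn : 0 ≤ δ := by rw [hδdef]; positivity
    have key : δ*(2*(k:ℝ))*((k:ℝ)+P0) * (q*(8*Real.sqrt ε+128*Real.sqrt 2))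
        ≤ ((k:ℝ)^2/4) * (q*(8*Real.sqrt ε+128*Real.sqrt 2)) := by
      have e1 : δ*(2*(k:ℝ))*((k:ℝ)+P0)*(q*(8*Real.sqrt ε+128*Real.sqrt 2))
          = 2*(k:ℝ)^2*q*(δ*(8*Real.sqrt ε+128*Real.sqrt 2))
            + 2*(k:ℝ)*(P0*q)*(δ*(8*Real.sqrt ε+128*Real.sqrt 2)) := by ring
      rw [e1, hδq, hP0q]
      have e2 : ((k:ℝ)^2/4)*(q*(8*Real.sqrt ε+128*Real.sqrt 2))
          = 2*(k:ℝ)^2*q*Real.sqrt ε + 32*(k:ℝ)^2*(q*Real.sqrt 2) := by ring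
      rw [e2]
      have e3 : 2*(k:ℝ)*(16*(k:ℝ)^2)*Real.sqrt ε = 32*(k:ℝ)^2*((k:ℝ)*Real.sqrt ε) := by ring
      rw [e3]
      have e4 : 32*(k:ℝ)^2*((k:ℝ)*Real.sqrt ε) ≤ 32*(k:ℝ)^2*(q*Real.sqrt 2) :=
        mul_le_mul_of_nonneg_left hks (by positivity)
      linarith
    have h2k : δ*(2*(k:ℝ)) ≤ (TT.card : ℝ) := by
      have hkP0 : 0 < (k:ℝ) + P0 := by positivity
      apply le_of_mul_le_mul_right _ hkP0
      have hqq : 0 < q*(8*Real.sqrt ε+128*Real.sqrt 2) := by positivity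
      have hred := le_of_mul_le_mul_right key hqq
      calc δ*(2*(k:ℝ))*((k:ℝ)+P0) ≤ (k:ℝ)^2/4 := hred
        _ = ((k:ℝ)/2)^2 := by ring
        _ ≤ (TT.card : ℝ) * ((k:ℝ)+P0) := hcomb
    calc δ * Real.sqrt n ≤ δ * (2*(k:ℝ)) := mul_le_mul_of_nonneg_left hsn2k hδnn
      _ ≤ (TT.card : ℝ) := h2k
  -- Step H: conclude
  have hGsub : Finset.univ \ (B1 ∪ B2) ⊆ (Finset.univ : Finset (Finset V2)).filter (fun W =>
      δ * Real.sqrt n ≤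
        ((((Finset.univ : Finset (Fin k)).image (fun i =>
            ((nbr E (x i.succ) ∩ W).card : ℤ) - ((nbr E (x 0) ∩ W).card : ℤ))).filter
          (fun y : ℤ => ((|y| : ℤ) : ℝ) ≤ 3 * Real.sqrt n)).card : ℝ)) := by
    intro W hW
    rw [Finset.mem_sdiff, Finset.mem_union] at hW
    obtain ⟨_, hWB⟩ := hW
    have hW1 : ¬ (P0 < (PW W:ℝ)) := fun h => hWB (Or.inl (by
      rw [hB1]; exact Finset.mem_filter.2 ⟨Finset.mem_univ _, h⟩))
    have hW2 : ¬ ((k:ℝ)/2 < (OutW W:ℝ)) := fun h => hWB (Or.inr (by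
      rw [hB2]; exact Finset.mem_filter.2 ⟨Finset.mem_univ _, h⟩))
    exact Finset.mem_filter.2 ⟨Finset.mem_univ _, stepG W hW1 hW2⟩
  have hucard : ((Finset.univ : Finset (Finset V2)).card) = 2^n := by
    rw [Finset.card_univ, Fintype.card_finset, hn]
  have hle1 : (B1 ∪ B2).card ≤ (Finset.univ : Finset (Finset V2)).card :=
    Finset.card_le_card (Finset.subset_univ _)
  have hsd1 : ((Finset.univ \ (B1 ∪ B2)).card : ℝ)
      = 2^n - ((B1 ∪ B2).card : ℝ) := by
    rw [Finset.card_sdiff_of_subset (Finset.subset_univ _), Nat.cast_sub hle1, hucard]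
    push_cast
    ring
  have hun : ((B1 ∪ B2).card : ℝ) ≤ (B1.card : ℝ) + (B2.card : ℝ) := by
    exact_mod_cast Nat.cast_le.2 (Finset.card_union_le B1 B2)
  have h2npos : (0:ℝ) < 2^n := by positivity
  have hGcard : (3:ℝ)/4 * 2^n ≤ ((Finset.univ \ (B1 ∪ B2)).card : ℝ) := by
    rw [hsd1]
    linarith [stepC, stepF, hun]
  refine le_trans hGcard ?_
  exact_mod_cast Nat.cast_le.2 (Finset.card_le_card hGsub)
end
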